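/- arXiv:0907.1676 — 5 statements merged into one kernel-verified Lean document; each statement's English description precedes it below -/
import Mathlib

section
/- Let α > 2 and let φ : ℝ³ → ℂ be a characteristic function such that sup_{ξ≠0} |φ(ξ) − 1|/|ξ|^α < ∞. Then φ(ξ) = 1 for all ξ ∈ ℝ³; in other words, for α > 2 the set K^α consists only of the constant function 1. -/
open MeasureTheory Real Filter Topology Metric
open scoped ENNReal NNReal

noncomputable section

/-- ℝ³ as a Euclidean space. -/
abbrev E3 := EuclideanSpace ℝ (Fin 3)

/-- The unit sphere S² in ℝ³. -/
abbrev S2 := Metric.sphere (0 : E3) 1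

/-- The surface measure on the unit sphere S² (total mass 4π). -/
def sphMeasure : Measure S2 := (volume : Measure E3).toSphere

/-- ξ⁺ = (ξ + |ξ|σ)/2. -/
def xiP (ξ : E3) (σ : S2) : E3 := (2 : ℝ)⁻¹ • (ξ + ‖ξ‖ • (σ : E3))

/-- ξ⁻ = (ξ − |ξ|σ)/2. -/
def xiM (ξ : E3) (σ : S2) : E3 := (2 : ℝ)⁻¹ • (ξ - ‖ξ‖ • (σ : E3))

/-- The kernel factor B(ξ·σ/|ξ|). -/
def kern (B : ℝ → ℝ) (ξ : E3) (σ : S2) : ℝ := B ((inner ℝ ξ (σ : E3) : ℝ) / ‖ξ‖)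

/-- φ is a characteristic function: the Fourier transform of a Borel probability
measure on ℝ³, i.e. φ(ξ) = ∫ exp(−i v·ξ) dμ(v). -/
def IsCharFun (φ : E3 → ℂ) : Prop :=
  ∃ μ : Measure E3, IsProbabilityMeasure μ ∧
    ∀ ξ : E3, φ ξ = ∫ v, Complex.exp (-(Complex.I * ((inner ℝ v ξ : ℝ) : ℂ))) ∂μ

/-- ‖φ − ψ‖_α = sup_{ξ ≠ 0} |φ(ξ) − ψ(ξ)|/|ξ|^α, as a value in [0,∞]. -/
def dAlpha (α : ℝ) (φ ψ : E3 → ℂ) : ℝ≥0∞ :=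
  ⨆ (ξ : E3) (_ : ξ ≠ 0), (‖φ ξ - ψ ξ‖₊ : ℝ≥0∞) / (‖ξ‖₊ : ℝ≥0∞) ^ α

/-- Membership in the space K^α: a characteristic function with ‖φ−1‖_α < ∞. -/
def memK (α : ℝ) (φ : E3 → ℂ) : Prop := IsCharFun φ ∧ dAlpha α φ 1 ≠ ⊤

/-- For α > 2, the set K^α contains only the constant function 1. -/
theorem Kalpha_trivial_of_two_lt (α : ℝ) (hα : 2 < α) (φ : E3 → ℂ)
    (hφ : IsCharFun φ) (hfin : dAlpha α φ 1 ≠ ⊤) :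
    ∀ ξ : E3, φ ξ = 1 := by
  obtain ⟨μ, hμ, hrep⟩ := hφ
  -- continuity / integrability of the integrands
  have hcont : ∀ ξ : E3, Continuous fun v : E3 => (inner ℝ v ξ : ℝ) :=
    fun ξ => continuous_id.inner continuous_const
  have hint_exp : ∀ ξ : E3,
      Integrable (fun v => Complex.exp (-(Complex.I * ((inner ℝ v ξ : ℝ) : ℂ)))) μ := by
    intro ξ
    refine Integrable.mono' (integrable_const 1) ?_ ?_
    · exact (Complex.continuous_exp.comp
        ((continuous_const.mul (Complex.continuous_ofReal.comp (hcont ξ))).neg)).aestronglyMeasurable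
    · filter_upwards with v
      rw [Complex.norm_exp]; simp
  have hint_cosonly : ∀ ξ : E3, Integrable (fun v => Real.cos (inner ℝ v ξ)) μ := by
    intro ξ
    refine Integrable.mono' (integrable_const 1) ?_ ?_
    · exact (Real.continuous_cos.comp (hcont ξ)).aestronglyMeasurable
    · filter_upwards with v
      rw [Real.norm_eq_abs]; exact Real.abs_cos_le_one _
  have hint_cos : ∀ ξ : E3, Integrable (fun v => 1 - Real.cos (inner ℝ v ξ)) μ :=
    fun ξ => (integrable_const 1).sub (hint_cosonly ξ)
  -- g ξ := ∫ (1 − cos⟨v,ξ⟩) dμ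
  set g : E3 → ℝ := fun ξ => ∫ v, (1 - Real.cos (inner ℝ v ξ)) ∂μ with hg
  have hg_re : ∀ ξ : E3, g ξ = 1 - (φ ξ).re := by
    intro ξ
    have hre : (φ ξ).re = ∫ v, Real.cos (inner ℝ v ξ) ∂μ := by
      rw [hrep ξ]
      have h := integral_re (hint_exp ξ)
      simp only [RCLike.re_to_complex] at h
      rw [← h]
      refine integral_congr_ae (Eventually.of_forall fun v => ?_)
      have h2 : -(Complex.I * ((inner ℝ v ξ : ℝ):ℂ)) = ((-(inner ℝ v ξ : ℝ) : ℝ):ℂ) * Complex.I := by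
        push_cast; ring
      show (Complex.exp (-(Complex.I * ((inner ℝ v ξ : ℝ):ℂ)))).re = Real.cos (inner ℝ v ξ)
      rw [h2, Complex.exp_ofReal_mul_I_re]; simp
    show (∫ v, (1 - Real.cos (inner ℝ v ξ)) ∂μ) = 1 - (φ ξ).re
    rw [integral_sub (integrable_const 1) (hint_cosonly ξ), hre]
    simp [measure_univ]
  have hg_nonneg : ∀ ξ : E3, 0 ≤ g ξ := fun ξ =>
    integral_nonneg fun v => sub_nonneg.mpr (Real.cos_le_one _)
  -- doubling inequality
  have hdouble : ∀ ξ : E3, g ((2:ℝ) • ξ) ≤ 4 * g ξ := by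
    intro ξ
    have hinner : ∀ v : E3, (inner ℝ v ((2:ℝ) • ξ) : ℝ) = 2 * inner ℝ v ξ :=
      fun v => real_inner_smul_right v ξ 2
    have heq : g ((2:ℝ) • ξ) = ∫ v, (1 - Real.cos (2 * inner ℝ v ξ)) ∂μ :=
      integral_congr_ae (Eventually.of_forall fun v => by simp only [hinner v])
    rw [heq]
    have hint1 : Integrable (fun v => 1 - Real.cos (2 * inner ℝ v ξ)) μ :=
      (hint_cos ((2:ℝ) • ξ)).congr (Eventually.of_forall fun v => by simp only [hinner v])
    calc (∫ v, (1 - Real.cos (2 * inner ℝ v ξ)) ∂μ)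
        ≤ ∫ v, 4 * (1 - Real.cos (inner ℝ v ξ)) ∂μ := by
          refine integral_mono hint1 ((hint_cos ξ).const_mul 4) fun v => ?_
          have h := Real.cos_two_mul (inner ℝ v ξ)
          have h2 := Real.cos_le_one (inner ℝ v ξ)
          simp only
          nlinarith
      _ = 4 * g ξ := integral_const_mul 4 _
  -- iteration
  have hiter : ∀ (ξ : E3) (n : ℕ), g ξ ≤ 4^n * g (((2:ℝ)^n)⁻¹ • ξ) := by
    intro ξ n
    induction n with
    | zero => simp
    | succ n ih =>
      have hsm : ((2:ℝ)^n)⁻¹ • ξ = (2:ℝ) • (((2:ℝ)^(n+1))⁻¹ • ξ) := by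
        rw [smul_smul]; congr 1; rw [pow_succ]
        field_simp
      have h2 := hdouble (((2:ℝ)^(n+1))⁻¹ • ξ)
      rw [← hsm] at h2
      calc g ξ ≤ 4^n * g (((2:ℝ)^n)⁻¹ • ξ) := ih
        _ ≤ 4^n * (4 * g (((2:ℝ)^(n+1))⁻¹ • ξ)) :=
            mul_le_mul_of_nonneg_left h2 (by positivity)
        _ = 4^(n+1) * g (((2:ℝ)^(n+1))⁻¹ • ξ) := by ring
  -- the finite norm bound, in real form
  set C : ℝ := (dAlpha α φ 1).toReal with hC
  have hCb : ∀ ξ : E3, ξ ≠ 0 → ‖φ ξ - 1‖ ≤ C * ‖ξ‖ ^ α := by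
    intro ξ hξ
    have h1 : (‖φ ξ - (1:E3 → ℂ) ξ‖₊ : ℝ≥0∞) / (‖ξ‖₊ : ℝ≥0∞) ^ α ≤ dAlpha α φ 1 :=
      le_iSup₂ (f := fun (ξ : E3) (_ : ξ ≠ 0) =>
        (‖φ ξ - (1:E3 → ℂ) ξ‖₊ : ℝ≥0∞) / (‖ξ‖₊ : ℝ≥0∞) ^ α) ξ hξ
    have hb0 : ((‖ξ‖₊ : ℝ≥0∞)) ^ α ≠ 0 := by
      simp [ENNReal.rpow_eq_zero_iff, norm_eq_zero, hξ]
    have hbt : ((‖ξ‖₊ : ℝ≥0∞)) ^ α ≠ ⊤ :=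
      ENNReal.rpow_ne_top_of_nonneg (by linarith) (by simp)
    have h2 : (‖φ ξ - (1:E3 → ℂ) ξ‖₊ : ℝ≥0∞) ≤ dAlpha α φ 1 * (‖ξ‖₊ : ℝ≥0∞) ^ α :=
      (ENNReal.div_le_iff hb0 hbt).mp h1
    have h3 := ENNReal.toReal_mono (ENNReal.mul_ne_top hfin hbt) h2
    rw [ENNReal.toReal_mul, ← ENNReal.toReal_rpow] at h3
    simpa using h3
  -- bound g by the norm
  have hgb : ∀ ξ : E3, ξ ≠ 0 → g ξ ≤ C * ‖ξ‖ ^ α := by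
    intro ξ hξ
    rw [hg_re ξ]
    calc 1 - (φ ξ).re = ((1:ℂ) - φ ξ).re := by simp
      _ ≤ ‖(1:ℂ) - φ ξ‖ := Complex.re_le_norm _
      _ = ‖φ ξ - 1‖ := norm_sub_rev _ _
      _ ≤ C * ‖ξ‖ ^ α := hCb ξ hξ
  -- geometric identity
  have hgeom : ∀ n : ℕ, (4:ℝ)^n * (((2:ℝ)^n)⁻¹) ^ α = ((2:ℝ)^(2-α))^n := by
    intro n
    induction n with
    | zero => simp
    | succ n ih =>
      have hmul : (((2:ℝ)^n * 2)⁻¹) ^ α = (((2:ℝ)^n)⁻¹) ^ α * ((2:ℝ)⁻¹) ^ α := by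
        rw [mul_inv, Real.mul_rpow (by positivity) (by positivity)]
      have hr : (4:ℝ) * ((2:ℝ)⁻¹) ^ α = (2:ℝ)^(2-α) := by
        rw [Real.inv_rpow (by norm_num), Real.rpow_sub (by norm_num)]
        norm_num [div_eq_mul_inv]
      rw [pow_succ, pow_succ, pow_succ, hmul]
      calc (4:ℝ)^n * 4 * ((((2:ℝ)^n)⁻¹) ^ α * ((2:ℝ)⁻¹) ^ α)
          = ((4:ℝ)^n * (((2:ℝ)^n)⁻¹) ^ α) * (4 * ((2:ℝ)⁻¹) ^ α) := by ring
        _ = ((2:ℝ)^(2-α))^n * (2:ℝ)^(2-α) := by rw [ih, hr]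
  -- g vanishes everywhere
  have hgzero : ∀ ξ : E3, ξ ≠ 0 → g ξ = 0 := by
    intro ξ hξ
    have key : ∀ n : ℕ, g ξ ≤ (C * ‖ξ‖ ^ α) * ((2:ℝ)^(2-α))^n := by
      intro n
      have hη : (((2:ℝ)^n)⁻¹ • ξ : E3) ≠ 0 := by
        simp [smul_eq_zero, hξ]
      have hnorm : ‖(((2:ℝ)^n)⁻¹ • ξ : E3)‖ = ((2:ℝ)^n)⁻¹ * ‖ξ‖ := by
        rw [norm_smul, Real.norm_eq_abs, abs_of_pos (by positivity)]
      calc g ξ ≤ 4^n * g (((2:ℝ)^n)⁻¹ • ξ) := hiter ξ n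
        _ ≤ 4^n * (C * ‖(((2:ℝ)^n)⁻¹ • ξ : E3)‖ ^ α) :=
            mul_le_mul_of_nonneg_left (hgb _ hη) (by positivity)
        _ = (C * ‖ξ‖ ^ α) * ((4:ℝ)^n * (((2:ℝ)^n)⁻¹) ^ α) := by
            rw [hnorm, Real.mul_rpow (by positivity) (norm_nonneg _)]
            ring
        _ = (C * ‖ξ‖ ^ α) * ((2:ℝ)^(2-α))^n := by rw [hgeom n]
    have hr0 : (0:ℝ) ≤ (2:ℝ)^(2-α) := Real.rpow_nonneg (by norm_num) _
    have hr1 : (2:ℝ)^(2-α) < 1 :=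
      Real.rpow_lt_one_of_one_lt_of_neg (by norm_num) (by linarith)
    have hlim : Tendsto (fun n : ℕ => (C * ‖ξ‖ ^ α) * ((2:ℝ)^(2-α))^n) atTop (𝓝 0) := by
      have h := tendsto_pow_atTop_nhds_zero_of_lt_one hr0 hr1
      simpa using h.const_mul (C * ‖ξ‖ ^ α)
    exact le_antisymm (ge_of_tendsto' hlim key) (hg_nonneg ξ)
  -- conclusion
  intro ξ
  by_cases hξ : ξ = 0
  · rw [hrep ξ, hξ]
    simp [inner_zero_right, integral_const, measure_univ]
  · have hzero : (∫ v, (1 - Real.cos (inner ℝ v ξ)) ∂μ) = 0 := hgzero ξ hξ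
    have hae : (fun v => 1 - Real.cos (inner ℝ v ξ)) =ᵐ[μ] 0 :=
      (integral_eq_zero_iff_of_nonneg
        (fun v => sub_nonneg.mpr (Real.cos_le_one _)) (hint_cos ξ)).mp hzero
    have hone : (fun v => Complex.exp (-(Complex.I * ((inner ℝ v ξ : ℝ):ℂ)))) =ᵐ[μ]
        fun _ => (1:ℂ) := by
      filter_upwards [hae] with v hv
      have hc : Real.cos (inner ℝ v ξ) = 1 := by
        have : (1:ℝ) - Real.cos (inner ℝ v ξ) = 0 := hv
        linarith
      have hs : Real.sin (inner ℝ v ξ) = 0 := by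
        have := Real.sin_sq_add_cos_sq (inner ℝ v ξ)
        nlinarith
      have h2 : -(Complex.I * ((inner ℝ v ξ : ℝ):ℂ)) = ((-(inner ℝ v ξ:ℝ) : ℝ):ℂ) * Complex.I := by
        push_cast; ring
      show Complex.exp (-(Complex.I * ((inner ℝ v ξ : ℝ):ℂ))) = 1
      rw [h2, Complex.exp_mul_I, ← Complex.ofReal_cos, ← Complex.ofReal_sin,
        Real.cos_neg, Real.sin_neg, hc, hs]
      simp
    rw [hrep ξ, integral_congr_ae hone]
    simp [measure_univ]
end
end

section
/- Let α ∈ [0,2] and φ ∈ K^α. Then for every ξ ∈ ℝ³ and every σ in the unit sphere S², with ξ⁺ = (ξ+|ξ|σ)/2 and ξ⁻ = (ξ−|ξ|σ)/2, one has |φ(ξ⁺)φ(ξ⁻) − φ(ξ)| ≤ 4 |ξ⁺|^{α/2} |ξ⁻|^{α/2} ‖φ − 1‖_α. -/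
open MeasureTheory Real Filter Topology Metric
open scoped ENNReal NNReal

noncomputable section

/-! ### Auxiliary lemmas -/

/-- The elementary character `v ↦ e^{-i v·ξ}`. -/
def cf (ξ : E3) (v : E3) : ℂ := Complex.exp (-(Complex.I * ((inner ℝ v ξ : ℝ) : ℂ)))

lemma cf_norm (ξ v : E3) : ‖cf ξ v‖ = 1 := by
  simp [cf, Complex.norm_exp]

lemma cf_mul (ξ η v : E3) : cf ξ v * cf η v = cf (ξ + η) v := by
  rw [cf, cf, cf, ← Complex.exp_add]
  congr 1
  rw [inner_add_right]
  push_cast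
  ring

lemma cf_continuous (ξ : E3) : Continuous (cf ξ) := by
  apply Complex.continuous_exp.comp
  exact (continuous_const.mul (Complex.continuous_ofReal.comp
    (continuous_id.inner continuous_const))).neg

lemma cf_zero (v : E3) : cf 0 v = 1 := by
  simp [cf]

lemma integrable_bdd {X : Type*} [MeasurableSpace X] {ν : Measure X} [IsFiniteMeasure ν]
    {g : X → ℂ} (hm : AEStronglyMeasurable g ν) (hb : ∀ x, ‖g x‖ ≤ 1) : Integrable g ν :=
  (integrable_const (1:ℝ)).mono' hm (Filter.Eventually.of_forall hb)

lemma normSq_norm (z : ℂ) : Complex.normSq z = ‖z‖^2 := by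
  rw [Complex.sq_norm]

section rep
variable (μ : Measure E3) [IsProbabilityMeasure μ]

omit [IsProbabilityMeasure μ] in
lemma cf_aesm_fst (a : E3) : AEStronglyMeasurable (fun p : E3 × E3 => cf a p.1) (μ.prod μ) :=
  ((cf_continuous a).comp continuous_fst).aestronglyMeasurable

omit [IsProbabilityMeasure μ] in
lemma cf_aesm_snd (a : E3) : AEStronglyMeasurable (fun p : E3 × E3 => cf a p.2) (μ.prod μ) :=
  ((cf_continuous a).comp continuous_snd).aestronglyMeasurable

lemma norm_integral_cf_le (a : E3) : ‖∫ v, cf a v ∂μ‖ ≤ 1 := by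
  calc ‖∫ v, cf a v ∂μ‖ ≤ ∫ v, ‖cf a v‖ ∂μ := norm_integral_le_integral_norm _
  _ = 1 := by simp only [cf_norm, integral_const, measure_univ, probReal_univ, ENNReal.toReal_one, smul_eq_mul,
      mul_one, one_smul]

lemma prod_int_11 (a b : E3) :
    ∫ p, cf a p.1 * cf b p.1 ∂(μ.prod μ) = ∫ v, cf (a + b) v ∂μ := by
  have h1 : (fun p : E3 × E3 => cf a p.1 * cf b p.1)
      = fun p : E3 × E3 => cf (a + b) p.1 * (fun _ : E3 => (1:ℂ)) p.2 := by
    funext p; simp [cf_mul]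
  have h2 := integral_prod_mul (μ := μ) (ν := μ) (cf (a + b)) (fun _ : E3 => (1:ℂ))
  rw [h1, h2]
  simp

lemma prod_int_22 (a b : E3) :
    ∫ p, cf a p.2 * cf b p.2 ∂(μ.prod μ) = ∫ v, cf (a + b) v ∂μ := by
  have h1 : (fun p : E3 × E3 => cf a p.2 * cf b p.2)
      = fun p : E3 × E3 => (fun _ : E3 => (1:ℂ)) p.1 * cf (a + b) p.2 := by
    funext p; simp [cf_mul]
  have h2 := integral_prod_mul (μ := μ) (ν := μ) (fun _ : E3 => (1:ℂ)) (cf (a + b))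
  rw [h1, h2]
  simp

lemma key_identity (a b : E3) :
    (∫ v, cf a v ∂μ) * (∫ v, cf b v ∂μ) - ∫ v, cf (a + b) v ∂μ
      = (-(1:ℂ)/2) * ∫ p, (cf a p.1 - cf a p.2) * (cf b p.1 - cf b p.2) ∂(μ.prod μ) := by
  have hI : ∀ (f g : E3 × E3 → ℂ), AEStronglyMeasurable f (μ.prod μ) →
      AEStronglyMeasurable g (μ.prod μ) → (∀ p, ‖f p‖ = 1) → (∀ p, ‖g p‖ = 1) →
      Integrable (fun p => f p * g p) (μ.prod μ) := by
    intro f g hf hg hf1 hg1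
    exact integrable_bdd (hf.mul hg) (fun p => by rw [norm_mul, hf1, hg1, mul_one])
  have I11 : Integrable (fun p : E3 × E3 => cf a p.1 * cf b p.1) (μ.prod μ) :=
    hI _ _ (cf_aesm_fst μ a) (cf_aesm_fst μ b) (fun p => cf_norm a p.1) (fun p => cf_norm b p.1)
  have I12 : Integrable (fun p : E3 × E3 => cf a p.1 * cf b p.2) (μ.prod μ) :=
    hI _ _ (cf_aesm_fst μ a) (cf_aesm_snd μ b) (fun p => cf_norm a p.1) (fun p => cf_norm b p.2)
  have I21 : Integrable (fun p : E3 × E3 => cf a p.2 * cf b p.1) (μ.prod μ) :=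
    hI _ _ (cf_aesm_snd μ a) (cf_aesm_fst μ b) (fun p => cf_norm a p.2) (fun p => cf_norm b p.1)
  have I22 : Integrable (fun p : E3 × E3 => cf a p.2 * cf b p.2) (μ.prod μ) :=
    hI _ _ (cf_aesm_snd μ a) (cf_aesm_snd μ b) (fun p => cf_norm a p.2) (fun p => cf_norm b p.2)
  have J1 : Integrable (fun p : E3 × E3 => cf a p.1 * cf b p.1 - cf a p.1 * cf b p.2)
      (μ.prod μ) := I11.sub I12
  have J2 : Integrable (fun p : E3 × E3 => cf a p.2 * cf b p.1 - cf a p.2 * cf b p.2)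
      (μ.prod μ) := I21.sub I22
  have expand : (fun p : E3 × E3 => (cf a p.1 - cf a p.2) * (cf b p.1 - cf b p.2))
      = fun p : E3 × E3 => (cf a p.1 * cf b p.1 - cf a p.1 * cf b p.2)
          - (cf a p.2 * cf b p.1 - cf a p.2 * cf b p.2) := by
    funext p; ring
  rw [expand, integral_sub J1 J2, integral_sub I11 I12, integral_sub I21 I22,
    prod_int_11, prod_int_22]
  have h12 := integral_prod_mul (μ := μ) (ν := μ) (cf a) (cf b)
  have h21 := integral_prod_mul (μ := μ) (ν := μ) (cf b) (cf a)
  rw [h12]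
  rw [show (fun p : E3 × E3 => cf a p.2 * cf b p.1)
      = fun p : E3 × E3 => cf b p.1 * cf a p.2 from funext fun p => mul_comm _ _, h21]
  ring

lemma second_moment (a : E3) :
    ∫ p, ‖cf a p.1 - cf a p.2‖^2 ∂(μ.prod μ) = 2 - 2 * ‖∫ v, cf a v ∂μ‖^2 := by
  have hpt : ∀ p : E3 × E3, ‖cf a p.1 - cf a p.2‖^2
      = 2 - 2 * (cf a p.1 * (starRingEnd ℂ) (cf a p.2)).re := by
    intro p
    rw [← normSq_norm, Complex.normSq_sub, normSq_norm, normSq_norm, cf_norm, cf_norm]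
    ring
  have hInt : Integrable (fun p : E3 × E3 => cf a p.1 * (starRingEnd ℂ) (cf a p.2))
      (μ.prod μ) := by
    refine integrable_bdd ?_ (fun p => by
      rw [norm_mul, RCLike.norm_conj, cf_norm, cf_norm, mul_one])
    exact (cf_aesm_fst μ a).mul
      ((Complex.continuous_conj.comp ((cf_continuous a).comp continuous_snd)).aestronglyMeasurable)
  have hre : ∫ p, (cf a p.1 * (starRingEnd ℂ) (cf a p.2)).re ∂(μ.prod μ)
      = ‖∫ v, cf a v ∂μ‖^2 := by
    have h0 := integral_re (𝕜 := ℂ) hInt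
    have h1 := integral_prod_mul (μ := μ) (ν := μ) (cf a)
      (fun v => (starRingEnd ℂ) (cf a v))
    rw [h1, integral_conj] at h0
    have h2 : ((∫ v, cf a v ∂μ) * (starRingEnd ℂ) (∫ v, cf a v ∂μ)).re
        = ‖∫ v, cf a v ∂μ‖^2 := by
      rw [Complex.mul_conj]
      rw [← normSq_norm]
      simp
    have h0' : ∫ p, (cf a p.1 * (starRingEnd ℂ) (cf a p.2)).re ∂(μ.prod μ)
        = ((∫ v, cf a v ∂μ) * (starRingEnd ℂ) (∫ v, cf a v ∂μ)).re := h0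
    rw [h2] at h0'
    exact h0'
  have hIntRe : Integrable (fun p : E3 × E3 => (cf a p.1 * (starRingEnd ℂ) (cf a p.2)).re)
      (μ.prod μ) := hInt.re
  calc ∫ p, ‖cf a p.1 - cf a p.2‖^2 ∂(μ.prod μ)
      = ∫ p, (2 - 2 * (cf a p.1 * (starRingEnd ℂ) (cf a p.2)).re) ∂(μ.prod μ) := by
        exact integral_congr_ae (Filter.Eventually.of_forall hpt)
    _ = 2 - 2 * ‖∫ v, cf a v ∂μ‖^2 := by
        rw [integral_sub (integrable_const 2) (hIntRe.const_mul 2), integral_const,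
          integral_const_mul, hre]
        simp
end rep

lemma cs_bound {X : Type*} [MeasurableSpace X] {ν : Measure X} [IsProbabilityMeasure ν]
    {F G : X → ℂ} (hF : AEStronglyMeasurable F ν) (hG : AEStronglyMeasurable G ν)
    (hFb : ∀ x, ‖F x‖ ≤ 2) (hGb : ∀ x, ‖G x‖ ≤ 2) :
    ‖∫ x, F x * G x ∂ν‖ ≤ Real.sqrt (∫ x, ‖F x‖^2 ∂ν) * Real.sqrt (∫ x, ‖G x‖^2 ∂ν) := by
  have hpq : Real.HolderConjugate 2 2 := Real.HolderConjugate.two_two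
  have hFm : MemLp F (ENNReal.ofReal 2) ν :=
    MemLp.of_bound hF 2 (Filter.Eventually.of_forall hFb)
  have hGm : MemLp G (ENNReal.ofReal 2) ν :=
    MemLp.of_bound hG 2 (Filter.Eventually.of_forall hGb)
  have key := integral_mul_norm_le_Lp_mul_Lq (μ := ν) hpq hFm hGm
  calc ‖∫ x, F x * G x ∂ν‖ ≤ ∫ x, ‖F x * G x‖ ∂ν := norm_integral_le_integral_norm _
    _ = ∫ x, ‖F x‖ * ‖G x‖ ∂ν := by simp only [norm_mul]
    _ ≤ (∫ x, ‖F x‖^(2:ℝ) ∂ν)^(1/2:ℝ) * (∫ x, ‖G x‖^(2:ℝ) ∂ν)^(1/2:ℝ) := key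
    _ = Real.sqrt (∫ x, ‖F x‖^2 ∂ν) * Real.sqrt (∫ x, ‖G x‖^2 ∂ν) := by
        simp_rw [Real.rpow_two, ← Real.sqrt_eq_rpow]

lemma main_real (μ : Measure E3) [IsProbabilityMeasure μ] (α C : ℝ) (hα0 : 0 ≤ α)
    (hC0 : 0 ≤ C) (φ : E3 → ℂ) (hrep : ∀ ξ, φ ξ = ∫ v, cf ξ v ∂μ)
    (hC : ∀ η : E3, ‖φ η - 1‖ ≤ C * ‖η‖ ^ α) (a b : E3) :
    ‖φ a * φ b - φ (a + b)‖ ≤ 2 * C * ‖a‖ ^ (α/2) * ‖b‖ ^ (α/2) := by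
  have hsm : ∀ x : E3, ∫ p, ‖cf x p.1 - cf x p.2‖^2 ∂(μ.prod μ) ≤ 4 * C * ‖x‖ ^ α := by
    intro x
    rw [second_moment]
    have h1 : ‖∫ v, cf x v ∂μ‖ ≤ 1 := norm_integral_cf_le μ x
    have h2 : 1 - ‖∫ v, cf x v ∂μ‖ ≤ C * ‖x‖ ^ α := by
      refine le_trans ?_ (hC x)
      rw [hrep x]
      calc 1 - ‖∫ v, cf x v ∂μ‖ ≤ ‖(1:ℂ) - ∫ v, cf x v ∂μ‖ := by
            simpa using norm_sub_norm_le (1:ℂ) (∫ v, cf x v ∂μ)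
        _ = ‖(∫ v, cf x v ∂μ) - 1‖ := norm_sub_rev _ _
    have h3 : (0:ℝ) ≤ ‖∫ v, cf x v ∂μ‖ := norm_nonneg _
    nlinarith [h1, h2, h3]
  have hsqrt : ∀ x : E3, Real.sqrt (4 * C * ‖x‖ ^ α) = 2 * Real.sqrt C * ‖x‖ ^ (α/2) := by
    intro x
    have h5 : (‖x‖ ^ (α/2))^2 = ‖x‖ ^ α := by
      rw [← Real.rpow_natCast (‖x‖ ^ (α/2)) 2, ← Real.rpow_mul (norm_nonneg x)]
      norm_num
    have h6 : (Real.sqrt C)^2 = C := Real.sq_sqrt hC0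
    have h4 : (2 * Real.sqrt C * ‖x‖ ^ (α/2))^2 = 4 * C * ‖x‖ ^ α := by
      calc (2 * Real.sqrt C * ‖x‖ ^ (α/2))^2
          = 4 * (Real.sqrt C)^2 * (‖x‖ ^ (α/2))^2 := by ring
        _ = 4 * C * ‖x‖ ^ α := by rw [h5, h6]
    rw [← h4, Real.sqrt_sq (by positivity)]
  have hF : AEStronglyMeasurable (fun p : E3 × E3 => cf a p.1 - cf a p.2) (μ.prod μ) :=
    (cf_aesm_fst μ a).sub (cf_aesm_snd μ a)
  have hG : AEStronglyMeasurable (fun p : E3 × E3 => cf b p.1 - cf b p.2) (μ.prod μ) :=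
    (cf_aesm_fst μ b).sub (cf_aesm_snd μ b)
  have hFb : ∀ p : E3 × E3, ‖cf a p.1 - cf a p.2‖ ≤ 2 := fun p => by
    calc ‖cf a p.1 - cf a p.2‖ ≤ ‖cf a p.1‖ + ‖cf a p.2‖ := norm_sub_le _ _
      _ = 2 := by rw [cf_norm, cf_norm]; norm_num
  have hGb : ∀ p : E3 × E3, ‖cf b p.1 - cf b p.2‖ ≤ 2 := fun p => by
    calc ‖cf b p.1 - cf b p.2‖ ≤ ‖cf b p.1‖ + ‖cf b p.2‖ := norm_sub_le _ _
      _ = 2 := by rw [cf_norm, cf_norm]; norm_num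
  have hcs := cs_bound (ν := μ.prod μ) hF hG hFb hGb
  have hid := key_identity μ a b
  have hsa : Real.sqrt (∫ p, ‖cf a p.1 - cf a p.2‖^2 ∂(μ.prod μ))
      ≤ 2 * Real.sqrt C * ‖a‖ ^ (α/2) := by
    rw [← hsqrt a]; exact Real.sqrt_le_sqrt (hsm a)
  have hsb : Real.sqrt (∫ p, ‖cf b p.1 - cf b p.2‖^2 ∂(μ.prod μ))
      ≤ 2 * Real.sqrt C * ‖b‖ ^ (α/2) := by
    rw [← hsqrt b]; exact Real.sqrt_le_sqrt (hsm b)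
  rw [hrep a, hrep b, hrep (a + b), hid]
  rw [norm_mul]
  have hnorm_half : ‖(-(1:ℂ)/2)‖ = 1/2 := by
    rw [norm_div, norm_neg, norm_one]
    simp
  rw [hnorm_half]
  calc (1/2 : ℝ) * ‖∫ p, (cf a p.1 - cf a p.2) * (cf b p.1 - cf b p.2) ∂(μ.prod μ)‖
      ≤ (1/2) * (Real.sqrt (∫ p, ‖cf a p.1 - cf a p.2‖^2 ∂(μ.prod μ))
          * Real.sqrt (∫ p, ‖cf b p.1 - cf b p.2‖^2 ∂(μ.prod μ))) := by
        exact mul_le_mul_of_nonneg_left hcs (by norm_num)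
    _ ≤ (1/2) * ((2 * Real.sqrt C * ‖a‖ ^ (α/2)) * (2 * Real.sqrt C * ‖b‖ ^ (α/2))) := by
        refine mul_le_mul_of_nonneg_left ?_ (by norm_num)
        exact mul_le_mul hsa hsb (Real.sqrt_nonneg _) (by positivity)
    _ = 2 * ((Real.sqrt C) * (Real.sqrt C)) * ‖a‖ ^ (α/2) * ‖b‖ ^ (α/2) := by ring
    _ = 2 * C * ‖a‖ ^ (α/2) * ‖b‖ ^ (α/2) := by rw [Real.mul_self_sqrt hC0]

lemma xiP_add_xiM (ξ : E3) (σ : S2) : xiP ξ σ + xiM ξ σ = ξ := by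
  rw [xiP, xiM, ← smul_add]
  rw [show ξ + ‖ξ‖ • (σ : E3) + (ξ - ‖ξ‖ • (σ : E3)) = (2:ℝ) • ξ by
    rw [two_smul]; abel]
  rw [smul_smul]
  norm_num

/-- For φ ∈ K^α and all ξ ∈ ℝ³, σ ∈ S²:
|φ(ξ⁺)φ(ξ⁻) − φ(ξ)| ≤ 4 |ξ⁺|^{α/2} |ξ⁻|^{α/2} ‖φ − 1‖_α. -/
theorem collision_product_estimate (α : ℝ) (hα : α ∈ Set.Icc (0 : ℝ) 2) (φ : E3 → ℂ)
    (hφ : memK α φ) (ξ : E3) (σ : S2) :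
    (‖φ (xiP ξ σ) * φ (xiM ξ σ) - φ ξ‖₊ : ℝ≥0∞) ≤
      4 * (‖xiP ξ σ‖₊ : ℝ≥0∞) ^ (α/2) * (‖xiM ξ σ‖₊ : ℝ≥0∞) ^ (α/2) * dAlpha α φ 1 := by
  obtain ⟨⟨μ, hμ, hrep⟩, hfin⟩ := hφ
  have hα0 : (0:ℝ) ≤ α := hα.1
  set D := dAlpha α φ 1 with hD
  set C := D.toReal with hCdef
  have hC0 : 0 ≤ C := ENNReal.toReal_nonneg
  have hrep' : ∀ η : E3, φ η = ∫ v, cf η v ∂μ := hrep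
  -- pointwise bound from dAlpha
  have hC : ∀ η : E3, ‖φ η - 1‖ ≤ C * ‖η‖ ^ α := by
    intro η
    by_cases hη : η = 0
    · subst hη
      have hφ0 : φ 0 = 1 := by
        rw [hrep' 0]
        simp only [cf_zero]
        simp
      rw [hφ0]
      simp only [sub_self, norm_zero]
      positivity
    · have hle : (‖φ η - (1 : E3 → ℂ) η‖₊ : ℝ≥0∞) / (‖η‖₊ : ℝ≥0∞) ^ α ≤ D := by
        rw [hD, dAlpha]
        exact le_iSup₂ (f := fun (ξ : E3) (_ : ξ ≠ 0) =>
          (‖φ ξ - (1 : E3 → ℂ) ξ‖₊ : ℝ≥0∞) / (‖ξ‖₊ : ℝ≥0∞) ^ α) η hη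
    -- multiply out
      have hn0 : ((‖η‖₊ : ℝ≥0∞) ^ α) ≠ 0 := by
        simp only [ne_eq, ENNReal.rpow_eq_zero_iff, not_or]
        constructor
        · rintro ⟨h1, -⟩
          exact hη (by simpa using h1)
        · rintro ⟨h1, -⟩
          exact ENNReal.coe_ne_top h1
      have hnt : ((‖η‖₊ : ℝ≥0∞) ^ α) ≠ ⊤ := by
        exact ENNReal.rpow_ne_top_of_nonneg hα0 ENNReal.coe_ne_top
      have hmul : (‖φ η - (1 : E3 → ℂ) η‖₊ : ℝ≥0∞) ≤ D * (‖η‖₊ : ℝ≥0∞) ^ α := by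
        rw [← ENNReal.div_le_iff hn0 hnt]
        exact hle
      have hDR : ((‖φ η - (1 : E3 → ℂ) η‖₊ : ℝ≥0∞)).toReal
          ≤ (D * (‖η‖₊ : ℝ≥0∞) ^ α).toReal := by
        refine ENNReal.toReal_mono ?_ hmul
        exact ENNReal.mul_ne_top hfin hnt
      rw [ENNReal.toReal_mul] at hDR
      have h1 : ((‖φ η - (1 : E3 → ℂ) η‖₊ : ℝ≥0∞)).toReal = ‖φ η - 1‖ := by
        simp [Pi.one_apply]
      have h2 : (((‖η‖₊ : ℝ≥0∞)) ^ α).toReal = ‖η‖ ^ α := by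
        rw [← ENNReal.toReal_rpow]
        simp
      rw [h1, h2] at hDR
      exact hDR
  have hmain := main_real μ α C hα0 hC0 φ hrep' hC (xiP ξ σ) (xiM ξ σ)
  rw [xiP_add_xiM] at hmain
  -- convert to ℝ≥0∞
  have ha2 : 0 ≤ α/2 := by positivity
  have step1 : (‖φ (xiP ξ σ) * φ (xiM ξ σ) - φ ξ‖₊ : ℝ≥0∞)
      = ENNReal.ofReal ‖φ (xiP ξ σ) * φ (xiM ξ σ) - φ ξ‖ :=
    (ofReal_norm _).symm
  have step2 : ENNReal.ofReal (2 * C * ‖xiP ξ σ‖ ^ (α/2) * ‖xiM ξ σ‖ ^ (α/2))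
      = 2 * D * (‖xiP ξ σ‖₊ : ℝ≥0∞) ^ (α/2) * (‖xiM ξ σ‖₊ : ℝ≥0∞) ^ (α/2) := by
    rw [ENNReal.ofReal_mul (by positivity), ENNReal.ofReal_mul (by positivity),
      ENNReal.ofReal_mul (by norm_num)]
    rw [← ENNReal.ofReal_rpow_of_nonneg (norm_nonneg (xiP ξ σ)) ha2,
      ← ENNReal.ofReal_rpow_of_nonneg (norm_nonneg (xiM ξ σ)) ha2]
    rw [ofReal_norm, ofReal_norm, enorm_eq_nnnorm, enorm_eq_nnnorm]
    rw [hCdef, ENNReal.ofReal_toReal hfin]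
    norm_num
  calc (‖φ (xiP ξ σ) * φ (xiM ξ σ) - φ ξ‖₊ : ℝ≥0∞)
      = ENNReal.ofReal ‖φ (xiP ξ σ) * φ (xiM ξ σ) - φ ξ‖ := step1
    _ ≤ ENNReal.ofReal (2 * C * ‖xiP ξ σ‖ ^ (α/2) * ‖xiM ξ σ‖ ^ (α/2)) :=
        ENNReal.ofReal_le_ofReal hmain
    _ = 2 * D * (‖xiP ξ σ‖₊ : ℝ≥0∞) ^ (α/2) * (‖xiM ξ σ‖₊ : ℝ≥0∞) ^ (α/2) := step2
    _ ≤ 4 * D * (‖xiP ξ σ‖₊ : ℝ≥0∞) ^ (α/2) * (‖xiM ξ σ‖₊ : ℝ≥0∞) ^ (α/2) := by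
        gcongr
        norm_num
    _ = 4 * (‖xiP ξ σ‖₊ : ℝ≥0∞) ^ (α/2) * (‖xiM ξ σ‖₊ : ℝ≥0∞) ^ (α/2) * D := by
        ring
end
end

section
/- Let α ∈ [0,2] and φ ∈ K^α. Then for all ξ, η ∈ ℝ³ one has |φ(ξ) − φ(η)| ≤ √2 · |ξ − η|^{α/2} · ‖φ − 1‖_α^{1/2}. -/
open MeasureTheory Real Filter Topology Metric
open scoped ENNReal NNReal

noncomputable section

lemma norm_cexp_neg_I (θ : ℝ) : ‖Complex.exp (-(Complex.I * θ))‖ = 1 := by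
  rw [Complex.norm_exp]; simp

lemma cexp_neg_I_eq (θ : ℝ) :
    Complex.exp (-(Complex.I * θ)) = (Real.cos θ : ℂ) - (Real.sin θ : ℂ) * Complex.I := by
  have h : -(Complex.I * θ) = ((-θ : ℝ) : ℂ) * Complex.I := by push_cast; ring
  rw [h, Complex.exp_mul_I, Complex.ofReal_neg, Complex.cos_neg, Complex.sin_neg,
    ← Complex.ofReal_cos, ← Complex.ofReal_sin]
  ring

lemma norm_cexp_sub_one_sq (θ : ℝ) :
    ‖Complex.exp (-(Complex.I * θ)) - 1‖ ^ 2 = 2 - 2 * Real.cos θ := by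
  rw [cexp_neg_I_eq, Complex.sq_norm, Complex.normSq_apply]
  simp only [Complex.sub_re, Complex.sub_im, Complex.ofReal_re, Complex.ofReal_im,
    Complex.mul_re, Complex.mul_im, Complex.I_re, Complex.I_im, Complex.one_re, Complex.one_im]
  have := Real.sin_sq_add_cos_sq θ
  nlinarith

lemma re_cexp_neg_I (θ : ℝ) : (Complex.exp (-(Complex.I * θ))).re = Real.cos θ := by
  rw [cexp_neg_I_eq]
  simp only [Complex.sub_re, Complex.ofReal_re, Complex.mul_re, Complex.ofReal_im, Complex.I_re,
    Complex.I_im, mul_zero, mul_one, zero_mul, sub_zero]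


/-- For φ ∈ K^α and all ξ, η ∈ ℝ³: |φ(ξ) − φ(η)| ≤ √2 |ξ−η|^{α/2} ‖φ−1‖_α^{1/2}. -/
theorem holder_continuity_of_memK (α : ℝ) (hα : α ∈ Set.Icc (0 : ℝ) 2) (φ : E3 → ℂ)
    (hφ : memK α φ) (ξ η : E3) :
    (‖φ ξ - φ η‖₊ : ℝ≥0∞) ≤
      ENNReal.ofReal (Real.sqrt 2) * (‖ξ - η‖₊ : ℝ≥0∞) ^ (α/2) *
        (dAlpha α φ 1) ^ ((1 : ℝ)/2) := by
  obtain ⟨⟨μ, hμ, hrep⟩, hfin⟩ := hφ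
  by_cases hξη : ξ = η
  · simp [hξη]
  set ζ : E3 := ξ - η with hζdef
  have hζ0 : ζ ≠ 0 := sub_ne_zero.mpr hξη
  have hζpos : (0:ℝ) < ‖ζ‖ := norm_pos_iff.mpr hζ0
  set f : E3 → E3 → ℂ := fun ρ v => Complex.exp (-(Complex.I * ((inner ℝ v ρ : ℝ) : ℂ))) with hfdef
  have cont : ∀ ρ : E3, Continuous (f ρ) := by
    intro ρ
    exact (Complex.continuous_exp.comp
      ((continuous_const.mul (Complex.continuous_ofReal.comp
        (continuous_id.inner continuous_const))).neg))
  have intg : ∀ ρ : E3, Integrable (f ρ) μ := by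
    intro ρ
    refine (MemLp.of_bound (cont ρ).aestronglyMeasurable 1 ?_).integrable le_rfl
    filter_upwards with v
    exact le_of_eq (norm_cexp_neg_I _)
  set g : E3 → ℝ := fun v => ‖f ζ v - 1‖ with hgdef
  have hgcont : Continuous g := ((cont ζ).sub continuous_const).norm
  have step1 : ‖φ ξ - φ η‖ ≤ ∫ v, g v ∂μ := by
    rw [hrep ξ, hrep η, ← integral_sub (intg ξ) (intg η)]
    refine (norm_integral_le_integral_norm _).trans_eq ?_
    refine integral_congr_ae (Eventually.of_forall fun v => ?_)
    show ‖f ξ v - f η v‖ = ‖f ζ v - 1‖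
    have hinner : (inner ℝ v ξ : ℝ) - (inner ℝ v η : ℝ) = (inner ℝ v ζ : ℝ) :=
      (inner_sub_right v ξ η).symm
    have key : f ξ v - f η v = f η v * (f ζ v - 1) := by
      rw [mul_sub, mul_one, hfdef]
      simp only
      rw [← Complex.exp_add]
      congr 2
      rw [← hinner]
      push_cast
      ring
    rw [key, norm_mul, hfdef]
    simp only
    rw [norm_cexp_neg_I, one_mul]
  have memg : MemLp g 2 μ := by
    refine MemLp.of_bound hgcont.aestronglyMeasurable 2 ?_
    filter_upwards with v
    rw [Real.norm_eq_abs, abs_of_nonneg (norm_nonneg _)]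
    calc ‖f ζ v - 1‖ ≤ ‖f ζ v‖ + ‖(1:ℂ)‖ := norm_sub_le _ _
      _ = 2 := by rw [hfdef]; simp only; rw [norm_cexp_neg_I]; norm_num
  have step2 : (∫ v, g v ∂μ) ^ 2 ≤ ∫ v, g v ^ 2 ∂μ := by
    have h := ProbabilityTheory.variance_nonneg g μ
    rw [ProbabilityTheory.variance_eq_sub memg] at h
    simp only [Pi.pow_apply] at h
    linarith
  have hre : (φ ζ).re = ∫ v, Real.cos (inner ℝ v ζ : ℝ) ∂μ := by
    rw [hrep ζ]
    have h := integral_re (μ := μ) (𝕜 := ℂ) (intg ζ)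
    simp only [RCLike.re_to_complex] at h
    rw [← h]
    exact integral_congr_ae (Eventually.of_forall fun v => re_cexp_neg_I _)
  have intcos : Integrable (fun v => Real.cos (inner ℝ v ζ : ℝ)) μ := by
    refine (MemLp.of_bound ?_ 1 ?_).integrable le_rfl
    · exact (Real.continuous_cos.comp (continuous_id.inner continuous_const)).aestronglyMeasurable
    · filter_upwards with v
      rw [Real.norm_eq_abs]
      exact Real.abs_cos_le_one _
  have step3 : ∫ v, g v ^ 2 ∂μ ≤ 2 * ‖φ ζ - 1‖ := by
    have h1 : ∫ v, g v ^ 2 ∂μ = 2 - 2 * (φ ζ).re := by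
      have heq : ∀ v, g v ^ 2 = 2 - 2 * Real.cos (inner ℝ v ζ : ℝ) := fun v => by
        rw [hgdef]; exact norm_cexp_sub_one_sq _
      rw [integral_congr_ae (Eventually.of_forall heq), integral_sub (integrable_const _)
        (intcos.const_mul 2), integral_const, integral_const_mul, probReal_univ]
      rw [hre]
      simp
    rw [h1]
    have h2 : (1 - φ ζ).re ≤ ‖φ ζ - 1‖ := by
      calc (1 - φ ζ).re ≤ |(1 - φ ζ).re| := le_abs_self _
        _ ≤ ‖1 - φ ζ‖ := Complex.abs_re_le_norm _
        _ = ‖φ ζ - 1‖ := by rw [norm_sub_rev]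
    have h3 : (1 - φ ζ).re = 1 - (φ ζ).re := by simp
    linarith
  -- bound ‖φ ζ - 1‖ via dAlpha
  have hdle : (‖φ ζ - 1‖₊ : ℝ≥0∞) ≤ dAlpha α φ 1 * (‖ζ‖₊ : ℝ≥0∞) ^ α := by
    have hcz : ((‖ζ‖₊ : ℝ≥0∞)) ≠ 0 := by simpa using hζ0
    have hb0 : ((‖ζ‖₊ : ℝ≥0∞)) ^ α ≠ 0 :=
      (ENNReal.rpow_pos (lt_of_le_of_ne zero_le (Ne.symm hcz)) ENNReal.coe_ne_top).ne'
    have hbt : ((‖ζ‖₊ : ℝ≥0∞)) ^ α ≠ ⊤ := ENNReal.rpow_ne_top_of_nonneg hα.1 ENNReal.coe_ne_top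
    have hle : (‖φ ζ - (1 : E3 → ℂ) ζ‖₊ : ℝ≥0∞) / (‖ζ‖₊ : ℝ≥0∞) ^ α ≤ dAlpha α φ 1 :=
      le_iSup₂ (f := fun (ρ : E3) (_ : ρ ≠ 0) =>
        (‖φ ρ - (1 : E3 → ℂ) ρ‖₊ : ℝ≥0∞) / (‖ρ‖₊ : ℝ≥0∞) ^ α) ζ hζ0
    rw [ENNReal.div_le_iff hb0 hbt] at hle
    simpa [Pi.one_apply] using hle
  have hDfin : dAlpha α φ 1 * (‖ζ‖₊ : ℝ≥0∞) ^ α ≠ ⊤ :=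
    ENNReal.mul_ne_top hfin (ENNReal.rpow_ne_top_of_nonneg hα.1 ENNReal.coe_ne_top)
  set D : ℝ := (dAlpha α φ 1).toReal with hDdef
  have hD0 : 0 ≤ D := ENNReal.toReal_nonneg
  have hreal : ‖φ ζ - 1‖ ≤ D * ‖ζ‖ ^ α := by
    have := ENNReal.toReal_mono hDfin hdle
    simp only [ENNReal.toReal_mul, ← ENNReal.toReal_rpow, ENNReal.coe_toReal,
      coe_nnnorm] at this
    exact this
  -- combine
  have hsq : ‖φ ξ - φ η‖ ^ 2 ≤ 2 * (D * ‖ζ‖ ^ α) := by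
    calc ‖φ ξ - φ η‖ ^ 2 ≤ (∫ v, g v ∂μ) ^ 2 := by
          have h0 : (0:ℝ) ≤ ∫ v, g v ∂μ := (norm_nonneg _).trans step1
          exact pow_le_pow_left₀ (norm_nonneg _) step1 2
      _ ≤ ∫ v, g v ^ 2 ∂μ := step2
      _ ≤ 2 * ‖φ ζ - 1‖ := step3
      _ ≤ 2 * (D * ‖ζ‖ ^ α) := by linarith
  set R : ℝ := Real.sqrt 2 * ‖ζ‖ ^ (α/2) * D ^ ((1:ℝ)/2) with hRdef
  have hR0 : 0 ≤ R := by positivity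
  have hRsq : R ^ 2 = 2 * (D * ‖ζ‖ ^ α) := by
    rw [hRdef, mul_pow, mul_pow, Real.sq_sqrt (by norm_num : (0:ℝ) ≤ 2)]
    rw [← Real.rpow_natCast (‖ζ‖ ^ (α/2)) 2, ← Real.rpow_natCast (D ^ ((1:ℝ)/2)) 2,
      ← Real.rpow_mul (le_of_lt hζpos), ← Real.rpow_mul hD0]
    norm_num
    ring
  have hfinal : ‖φ ξ - φ η‖ ≤ R := by
    have h := Real.sqrt_le_sqrt (hRsq ▸ hsq)
    rwa [Real.sqrt_sq (norm_nonneg _), Real.sqrt_sq hR0] at h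
  -- pass to ℝ≥0∞
  have hgoal : (‖φ ξ - φ η‖₊ : ℝ≥0∞) ≤ ENNReal.ofReal R := by
    rw [← enorm_eq_nnnorm, ← ofReal_norm]
    exact ENNReal.ofReal_le_ofReal hfinal
  refine hgoal.trans (le_of_eq ?_)
  rw [hRdef, ENNReal.ofReal_mul (by positivity), ENNReal.ofReal_mul (Real.sqrt_nonneg _)]
  congr 1
  · congr 1
    rw [← ENNReal.ofReal_rpow_of_pos hζpos, ofReal_norm, enorm_eq_nnnorm]
  · rw [← ENNReal.ofReal_rpow_of_nonneg hD0 (by norm_num : (0:ℝ) ≤ (1:ℝ)/2), hDdef,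
      ENNReal.ofReal_toReal hfin]
end
end

section
/- Let α ∈ (0,2] and let μ be a Borel probability measure on ℝ³ with ∫_{ℝ³} |v|^α dμ(v) < ∞; if α ∈ (1,2], assume in addition that ∫_{ℝ³} v_i dμ(v) = 0 for i = 1,2,3. Then the characteristic function φ(ξ) = ∫_{ℝ³} e^{−i v·ξ} dμ(v) belongs to K^α; more precisely there is a constant C depending only on α such that ‖φ − 1‖_α ≤ C ∫_{ℝ³} |v|^α dμ(v). -/
open MeasureTheory Real Filter Topology Metric
open scoped ENNReal NNReal

noncomputable section

lemma bound1 {α x : ℝ} (hα : 0 < α) (hα1 : α ≤ 1) :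
    ‖Complex.exp (-(Complex.I * x)) - 1‖ ≤ 4 * |x| ^ α := by
  have habs : ‖-(Complex.I * x)‖ = |x| := by
    simp
  rcases le_or_gt (|x|) 1 with h | h
  · have := Complex.norm_exp_sub_one_le (x := -(Complex.I * x)) (by rw [habs]; exact h)
    rw [habs] at this
    refine this.trans ?_
    have hx : |x| ≤ |x| ^ α := by
      rcases eq_or_lt_of_le (abs_nonneg x) with h0 | h0
      · simp [← h0]; positivity
      · calc |x| = |x| ^ (1:ℝ) := (Real.rpow_one _).symm
          _ ≤ |x| ^ α := Real.rpow_le_rpow_of_exponent_ge h0 h hα1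
    nlinarith [Real.rpow_nonneg (abs_nonneg x) α]
  · have h2 : ‖Complex.exp (-(Complex.I * x)) - 1‖ ≤ 2 := by
      calc ‖Complex.exp (-(Complex.I * x)) - 1‖ ≤ ‖Complex.exp (-(Complex.I * x))‖ + ‖(1:ℂ)‖ :=
        norm_sub_le _ _
      _ ≤ 2 := by
        rw [Complex.norm_exp]
        simp
        norm_num
    refine h2.trans ?_
    have : (1:ℝ) ≤ |x| ^ α := Real.one_le_rpow h.le hα.le
    nlinarith

lemma bound2 {α x : ℝ} (hα : 1 < α) (hα2 : α ≤ 2) :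
    ‖Complex.exp (-(Complex.I * x)) - 1 + Complex.I * x‖ ≤ 4 * |x| ^ α := by
  have habs : ‖-(Complex.I * x)‖ = |x| := by
    simp
  rcases le_or_gt (|x|) 1 with h | h
  · have := Complex.norm_exp_sub_one_sub_id_le (x := -(Complex.I * x)) (by rw [habs]; exact h)
    rw [habs] at this
    have heq : Complex.exp (-(Complex.I * x)) - 1 - -(Complex.I * x)
        = Complex.exp (-(Complex.I * x)) - 1 + Complex.I * x := by ring
    rw [heq] at this
    refine this.trans ?_
    have hx : |x| ^ (2:ℕ) ≤ |x| ^ α := by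
      rcases eq_or_lt_of_le (abs_nonneg x) with h0 | h0
      · have : x = 0 := by simpa using h0.symm
        simp [this]
        positivity
      · rw [← Real.rpow_natCast (|x|) 2]
        exact Real.rpow_le_rpow_of_exponent_ge h0 h (by exact_mod_cast hα2)
    nlinarith [Real.rpow_nonneg (abs_nonneg x) α]
  · have h2 : ‖Complex.exp (-(Complex.I * x)) - 1 + Complex.I * x‖ ≤ 2 + |x| := by
      calc ‖Complex.exp (-(Complex.I * x)) - 1 + Complex.I * x‖
          ≤ ‖Complex.exp (-(Complex.I * x)) - 1‖ + ‖Complex.I * (x:ℂ)‖ := norm_add_le _ _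
      _ ≤ 2 + |x| := by
        have : ‖Complex.I * (x:ℂ)‖ = |x| := by simp
        rw [this]
        gcongr
        calc ‖Complex.exp (-(Complex.I * x)) - 1‖ ≤ ‖Complex.exp (-(Complex.I * x))‖ + ‖(1:ℂ)‖ :=
          norm_sub_le _ _
        _ ≤ 2 := by rw [Complex.norm_exp]; simp; norm_num
    refine h2.trans ?_
    have hxa : |x| ≤ |x| ^ α := by
      calc |x| = |x| ^ (1:ℝ) := (Real.rpow_one _).symm
        _ ≤ |x| ^ α := Real.rpow_le_rpow_of_exponent_le h.le hα.le
    have h1 : (1:ℝ) ≤ |x| ^ α := Real.one_le_rpow h.le (by linarith)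
    nlinarith

lemma keyEst (α : ℝ) (hα : α ∈ Set.Ioc (0:ℝ) 2) (μ : Measure E3) (hp : IsProbabilityMeasure μ)
    (hmom : Integrable (fun v : E3 => ‖v‖ ^ α) μ)
    (hmean : 1 < α → ∫ v, v ∂μ = 0)
    (φ : E3 → ℂ)
    (hφ : ∀ ξ : E3, φ ξ = ∫ v, Complex.exp (-(Complex.I * ((inner ℝ v ξ : ℝ) : ℂ))) ∂μ)
    (ξ : E3) :
    ‖φ ξ - 1‖ ≤ 4 * ‖ξ‖ ^ α * ∫ v, ‖v‖ ^ α ∂μ := by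
  obtain ⟨hα0, hα2⟩ := hα
  set M := ∫ v, ‖v‖ ^ α ∂μ with hM
  -- pointwise moment bound
  have hptw : ∀ v : E3, 4 * |(inner ℝ v ξ : ℝ)| ^ α ≤ 4 * ‖ξ‖ ^ α * ‖v‖ ^ α := by
    intro v
    have h1 : |(inner ℝ v ξ : ℝ)| ≤ ‖v‖ * ‖ξ‖ := abs_real_inner_le_norm v ξ
    have h2 : |(inner ℝ v ξ : ℝ)| ^ α ≤ (‖v‖ * ‖ξ‖) ^ α :=
      Real.rpow_le_rpow (abs_nonneg _) h1 hα0.le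
    rw [Real.mul_rpow (norm_nonneg v) (norm_nonneg ξ)] at h2
    nlinarith [Real.rpow_nonneg (norm_nonneg v) α, Real.rpow_nonneg (norm_nonneg ξ) α]
  have hc0 : Continuous fun v : E3 => (inner ℝ v ξ : ℝ) := continuous_id.inner continuous_const
  have hcont : Continuous fun v : E3 => Complex.exp (-(Complex.I * ((inner ℝ v ξ : ℝ) : ℂ))) :=
    Complex.continuous_exp.comp ((continuous_const.mul (Complex.continuous_ofReal.comp hc0)).neg)
  have hexp : Integrable (fun v : E3 => Complex.exp (-(Complex.I * ((inner ℝ v ξ : ℝ) : ℂ)))) μ := by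
    refine ⟨hcont.aestronglyMeasurable, ?_⟩
    refine HasFiniteIntegral.of_bounded (C := 1) (Filter.Eventually.of_forall fun v => ?_)
    rw [Complex.norm_exp]
    simp
  have hg : Integrable (fun v : E3 => 4 * ‖ξ‖ ^ α * ‖v‖ ^ α) μ := hmom.const_mul _
  rcases le_or_gt α 1 with h1 | h1
  · -- α ≤ 1 case
    have hrepr : φ ξ - 1 = ∫ v, (Complex.exp (-(Complex.I * ((inner ℝ v ξ : ℝ) : ℂ))) - 1) ∂μ := by
      rw [hφ, integral_sub hexp (integrable_const 1), integral_const]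
      simp
    rw [hrepr]
    refine le_trans (norm_integral_le_of_norm_le hg (Filter.Eventually.of_forall fun v => ?_)) ?_
    · exact le_trans (bound1 hα0 h1) (hptw v)
    · rw [integral_const_mul]
  · -- α > 1 case
    have hvi : Integrable (fun v : E3 => v) μ := by
      refine Integrable.mono' ((integrable_const (1:ℝ)).add hmom) aestronglyMeasurable_id
        (Filter.Eventually.of_forall fun v => ?_)
      rcases le_or_gt ‖v‖ 1 with h | h
      · have : (0:ℝ) ≤ ‖v‖ ^ α := Real.rpow_nonneg (norm_nonneg v) α
        simpa using by linarith
      · have : ‖v‖ ≤ ‖v‖ ^ α := by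
          calc ‖v‖ = ‖v‖ ^ (1:ℝ) := (Real.rpow_one _).symm
            _ ≤ ‖v‖ ^ α := Real.rpow_le_rpow_of_exponent_le h.le h1.le
        simpa using by linarith
    have hinR : Integrable (fun v : E3 => (inner ℝ v ξ : ℝ)) μ := by
      have := (innerSL ℝ ξ).integrable_comp hvi
      simpa [real_inner_comm, mul_comm] using this
    have hinC : Integrable (fun v : E3 => ((inner ℝ v ξ : ℝ) : ℂ)) μ := hinR.ofReal
    have hzero : ∫ v, (inner ℝ v ξ : ℝ) ∂μ = 0 := by
      have : ∫ v, (inner ℝ ξ v : ℝ) ∂μ = inner ℝ ξ (∫ v, v ∂μ) := integral_inner hvi ξ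
      rw [hmean h1] at this
      simp only [inner_zero_right] at this
      calc ∫ v, (inner ℝ v ξ : ℝ) ∂μ = ∫ v, (inner ℝ ξ v : ℝ) ∂μ := by
            congr 1; funext v; exact real_inner_comm ξ v
        _ = 0 := this
    have hrepr : φ ξ - 1 = ∫ v, (Complex.exp (-(Complex.I * ((inner ℝ v ξ : ℝ) : ℂ))) - 1
        + Complex.I * ((inner ℝ v ξ : ℝ) : ℂ)) ∂μ := by
      have hA : Integrable (fun v : E3 =>
          Complex.exp (-(Complex.I * ((inner ℝ v ξ : ℝ) : ℂ))) - 1) μ := hexp.sub (integrable_const 1)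
      rw [integral_add hA (hinC.const_mul Complex.I),
        integral_sub hexp (integrable_const 1), integral_const, integral_const_mul]
      have : ∫ a, ((inner ℝ a ξ : ℝ) : ℂ) ∂μ = ((∫ a, (inner ℝ a ξ : ℝ) ∂μ : ℝ) : ℂ) :=
        integral_ofReal
      rw [this, hzero]
      simp [hφ ξ]
    rw [hrepr]
    refine le_trans (norm_integral_le_of_norm_le hg (Filter.Eventually.of_forall fun v => ?_)) ?_
    · exact le_trans (bound2 h1 hα2) (hptw v)
    · rw [integral_const_mul]


set_option maxHeartbeats 2000000 in
/-- If μ is a Borel probability measure on ℝ³ with finite moment of order α ∈ (0,2]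
(with zero mean if α > 1), then its characteristic function belongs to K^α, and
‖φ − 1‖_α ≤ C ∫ |v|^α dμ(v) for a constant C depending only on α. -/
theorem charFun_mem_Kalpha_of_moment (α : ℝ) (hα : α ∈ Set.Ioc (0 : ℝ) 2) :
    ∃ C : ℝ, 0 < C ∧
      ∀ μ : Measure E3, IsProbabilityMeasure μ →
        Integrable (fun v : E3 => ‖v‖ ^ α) μ →
        (1 < α → ∫ v, v ∂μ = 0) →
        ∀ φ : E3 → ℂ,
          (∀ ξ : E3, φ ξ = ∫ v, Complex.exp (-(Complex.I * ((inner ℝ v ξ : ℝ) : ℂ))) ∂μ) →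
          memK α φ ∧ dAlpha α φ 1 ≤ ENNReal.ofReal (C * ∫ v, ‖v‖ ^ α ∂μ) := by
  refine ⟨4, by norm_num, ?_⟩
  intro μ hp hmom hmean φ hφ
  set M := ∫ v, ‖v‖ ^ α ∂μ with hM
  have hMnn : 0 ≤ M := integral_nonneg fun v => Real.rpow_nonneg (norm_nonneg v) α
  have key := keyEst α hα μ hp hmom hmean φ hφ
  have hle : dAlpha α φ 1 ≤ ENNReal.ofReal (4 * M) := by
    rw [dAlpha]
    refine iSup₂_le fun ξ hξ => ?_
    have hξ' : (0:ℝ) < ‖ξ‖ := norm_pos_iff.mpr hξ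
    refine ENNReal.div_le_of_le_mul ?_
    have hnorm : ‖φ ξ - (1 : E3 → ℂ) ξ‖ ≤ (4 * M) * ‖ξ‖ ^ α := by
      have := key ξ
      simp only [Pi.one_apply]
      nlinarith [Real.rpow_nonneg (norm_nonneg ξ) α]
    calc (‖φ ξ - (1 : E3 → ℂ) ξ‖₊ : ℝ≥0∞)
        = ENNReal.ofReal ‖φ ξ - (1 : E3 → ℂ) ξ‖ := (ofReal_norm _).symm
      _ ≤ ENNReal.ofReal ((4 * M) * ‖ξ‖ ^ α) := ENNReal.ofReal_le_ofReal hnorm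
      _ = ENNReal.ofReal (4 * M) * ENNReal.ofReal (‖ξ‖ ^ α) :=
          ENNReal.ofReal_mul (by positivity)
      _ = ENNReal.ofReal (4 * M) * (‖ξ‖₊ : ℝ≥0∞) ^ α := by
          rw [← ENNReal.ofReal_rpow_of_pos hξ', ofReal_norm, enorm_eq_nnnorm]
  exact ⟨⟨⟨μ, hp, hφ⟩, (hle.trans_lt ENNReal.ofReal_lt_top).ne⟩, hle⟩
end
end

section
/- Let α ∈ [0,2] and let B : (−1,1) → [0,∞) be integrable. For a characteristic function φ define G(φ)(ξ) := ∫_{S²} B(ξ·σ/|ξ|) φ(ξ⁺) φ(ξ⁻) dσ. Then for all φ, ψ ∈ K^α and all ξ ∈ ℝ³ one has |G(φ)(ξ) − G(ψ)(ξ)| ≤ γ_α ‖φ − ψ‖_α |ξ|^α. -/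
open MeasureTheory Real Filter Topology Metric
open scoped ENNReal NNReal

noncomputable section

/-- γ_α = 2π ∫_{−1}^{1} B(s) [((1+s)/2)^{α/2} + ((1−s)/2)^{α/2}] ds. -/
def gammaA (B : ℝ → ℝ) (α : ℝ) : ℝ :=
  2 * π * ∫ s in Set.Ioo (-1 : ℝ) 1, B s * (((1+s)/2) ^ (α/2) + ((1-s)/2) ^ (α/2))

/-- The gain operator G(φ)(ξ) = ∫_{S²} B(ξ·σ/|ξ|) φ(ξ⁺) φ(ξ⁻) dσ. -/
def Gop (B : ℝ → ℝ) (φ : E3 → ℂ) (ξ : E3) : ℂ :=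
  ∫ σ : S2, (kern B ξ σ : ℂ) * φ (xiP ξ σ) * φ (xiM ξ σ) ∂sphMeasure

open Set
open scoped Pointwise

abbrev E2 := EuclideanSpace ℝ (Fin 2)

lemma E2_vol_ball (R : ℝ) (hR : 0 ≤ R) :
    volume (Metric.ball (0 : E2) R) = ENNReal.ofReal (π * R ^ 2) := by
  rw [EuclideanSpace.volume_ball]
  have : Real.Gamma ((Fintype.card (Fin 2) : ℝ) / 2 + 1) = 1 := by
    norm_num [Real.Gamma_two]
  rw [this]
  simp only [Fintype.card_fin]
  rw [← ENNReal.ofReal_pow hR, ← ENNReal.ofReal_mul (by positivity)]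
  congr 1
  rw [Real.sq_sqrt Real.pi_nonneg]
  ring

lemma vol_ann (a c : ℝ) (ha : 0 ≤ a) (hac : a ≤ c) :
    volume {x : E2 | a ≤ ‖x‖ ^ 2 ∧ ‖x‖ ^ 2 < c} = ENNReal.ofReal (π * (c - a)) := by
  have hc : 0 ≤ c := ha.trans hac
  have hset : {x : E2 | a ≤ ‖x‖ ^ 2 ∧ ‖x‖ ^ 2 < c}
      = Metric.ball 0 (Real.sqrt c) \ Metric.ball 0 (Real.sqrt a) := by
    ext x
    simp only [Set.mem_setOf_eq, Set.mem_diff, mem_ball_zero_iff,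
      Real.lt_sqrt (norm_nonneg x), not_lt]
    tauto
  rw [hset, measure_diff (Metric.ball_subset_ball (Real.sqrt_le_sqrt hac))
      measurableSet_ball.nullMeasurableSet measure_ball_lt_top.ne,
    E2_vol_ball _ (Real.sqrt_nonneg _), E2_vol_ball _ (Real.sqrt_nonneg _),
    Real.sq_sqrt hc, Real.sq_sqrt ha,
    ← ENNReal.ofReal_sub _ (by positivity)]
  ring_nf

lemma vol_ball_sq (c : ℝ) (hc : 0 ≤ c) :
    volume {x : E2 | ‖x‖ ^ 2 < c} = ENNReal.ofReal (π * c) := by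
  have : {x : E2 | ‖x‖ ^ 2 < c} = {x : E2 | 0 ≤ ‖x‖ ^ 2 ∧ ‖x‖ ^ 2 < c} := by
    ext x; simp [sq_nonneg]
  rw [this, vol_ann 0 c le_rfl hc]
  norm_num

lemma vol_cball_sq (c d : ℝ) (hc : 0 ≤ c) (hcd : c < d) :
    volume {x : E2 | ‖x‖ ^ 2 ≤ c ∧ ‖x‖ ^ 2 < d} = ENNReal.ofReal (π * c) := by
  have hset : {x : E2 | ‖x‖ ^ 2 ≤ c ∧ ‖x‖ ^ 2 < d} = Metric.closedBall 0 (Real.sqrt c) := by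
    ext x
    simp only [Set.mem_setOf_eq, mem_closedBall_zero_iff]
    rw [Real.le_sqrt (norm_nonneg x) hc]
    exact ⟨fun h => h.1, fun h => ⟨h, h.trans_lt hcd⟩⟩
  rw [hset, EuclideanSpace.volume_closedBall]
  have : Real.Gamma ((Fintype.card (Fin 2) : ℝ) / 2 + 1) = 1 := by
    norm_num [Real.Gamma_two]
  rw [this]
  simp only [Fintype.card_fin]
  rw [← ENNReal.ofReal_pow (Real.sqrt_nonneg c), ← ENNReal.ofReal_mul (by positivity)]
  congr 1
  rw [Real.sq_sqrt hc, Real.sq_sqrt Real.pi_nonneg]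
  ring

/-- slice set -/
def SL (t z : ℝ) : Set (Fin 2 → ℝ) :=
  {v | z ^ 2 + (v 0 ^ 2 + v 1 ^ 2) < 1 ∧ z ≤ t * Real.sqrt (z ^ 2 + (v 0 ^ 2 + v 1 ^ 2))}

lemma SL_meas (t z : ℝ) : MeasurableSet (SL t z) := by
  have m1 : Measurable fun v : Fin 2 → ℝ => z ^ 2 + (v 0 ^ 2 + v 1 ^ 2) := by fun_prop
  have m2 : Measurable fun v : Fin 2 → ℝ => t * Real.sqrt (z ^ 2 + (v 0 ^ 2 + v 1 ^ 2)) := by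
    fun_prop
  exact (measurableSet_lt m1 measurable_const).inter (measurableSet_le measurable_const m2)

lemma SL_transfer (t z : ℝ) :
    volume (SL t z) =
      volume {x : E2 | z ^ 2 + ‖x‖ ^ 2 < 1 ∧ z ≤ t * Real.sqrt (z ^ 2 + ‖x‖ ^ 2)} := by
  rw [← (EuclideanSpace.volume_preserving_symm_measurableEquiv_toLp (Fin 2)).measure_preimage
      (SL_meas t z).nullMeasurableSet]
  congr 1
  ext x
  have hx : ‖x‖ ^ 2 = x 0 ^ 2 + x 1 ^ 2 := by
    rw [EuclideanSpace.norm_eq, Real.sq_sqrt (by positivity)]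
    simp [Fin.sum_univ_two, sq_abs]
  simp only [Set.mem_preimage, SL, Set.mem_setOf_eq, hx]
  rfl

lemma pos_le_mul_sqrt_iff {z t s : ℝ} (hz : 0 < z) (ht : 0 ≤ t) (hs : 0 ≤ s) :
    z ≤ t * s ↔ z ^ 2 ≤ t ^ 2 * s ^ 2 := by
  rw [← mul_pow]
  exact (pow_le_pow_iff_left₀ hz.le (by positivity) two_ne_zero).symm

lemma nonpos_le_mul_sqrt_iff {z t s : ℝ} (hz : z ≤ 0) (ht : t ≤ 0) (hs : 0 ≤ s) :
    z ≤ t * s ↔ t ^ 2 * s ^ 2 ≤ z ^ 2 := by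
  have : z ≤ t * s ↔ (-t) * s ≤ -z := by constructor <;> intro h <;> nlinarith
  rw [this, show t ^ 2 * s ^ 2 = ((-t) * s) ^ 2 by ring, show z ^ 2 = (-z) ^ 2 by ring]
  exact (pow_le_pow_iff_left₀ (a := (-t) * s) (b := -z)
    (mul_nonneg (by linarith : (0:ℝ) ≤ -t) hs) (by linarith : (0:ℝ) ≤ -z) two_ne_zero).symm

-- case a : 0 ≤ t, -1 < z ≤ 0
lemma slice_a {t z : ℝ} (ht0 : 0 ≤ t) (hz : z ∈ Ioc (-1 : ℝ) 0) :
    volume (SL t z) = ENNReal.ofReal (π * (1 - z ^ 2)) := by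
  obtain ⟨hz1, hz0⟩ := hz
  rw [SL_transfer]
  have hset : {x : E2 | z ^ 2 + ‖x‖ ^ 2 < 1 ∧ z ≤ t * Real.sqrt (z ^ 2 + ‖x‖ ^ 2)}
      = {x : E2 | ‖x‖ ^ 2 < 1 - z ^ 2} := by
    ext x
    simp only [Set.mem_setOf_eq]
    constructor
    · intro h; linarith [h.1]
    · intro h
      refine ⟨by linarith, hz0.trans (by positivity)⟩
  rw [hset, vol_ball_sq _ (by nlinarith)]

-- case b : 0 < t ≤ 1, 0 < z ≤ t  (value formula; at z = t it's 0 area)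
lemma slice_b {t z : ℝ} (ht0 : 0 < t) (ht1 : t ≤ 1) (hz : z ∈ Ioc (0 : ℝ) t) :
    volume (SL t z) = ENNReal.ofReal (π * (1 - z ^ 2 / t ^ 2)) := by
  obtain ⟨hz0, hzt⟩ := hz
  rw [SL_transfer]
  have hsq : ∀ x : E2, Real.sqrt (z ^ 2 + ‖x‖ ^ 2) ^ 2 = z ^ 2 + ‖x‖ ^ 2 :=
    fun x => Real.sq_sqrt (by positivity)
  have hset : {x : E2 | z ^ 2 + ‖x‖ ^ 2 < 1 ∧ z ≤ t * Real.sqrt (z ^ 2 + ‖x‖ ^ 2)}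
      = {x : E2 | z ^ 2 * (1 - t ^ 2) / t ^ 2 ≤ ‖x‖ ^ 2 ∧ ‖x‖ ^ 2 < 1 - z ^ 2} := by
    ext x
    have h2 := pos_le_mul_sqrt_iff (s := Real.sqrt (z ^ 2 + ‖x‖ ^ 2)) hz0 ht0.le
      (Real.sqrt_nonneg _)
    rw [hsq x] at h2
    simp only [Set.mem_setOf_eq, h2]
    constructor
    · rintro ⟨h1, h3⟩
      refine ⟨?_, by linarith⟩
      rw [div_le_iff₀ (by positivity)]
      nlinarith
    · rintro ⟨h1, h3⟩
      rw [div_le_iff₀ (by positivity)] at h1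
      exact ⟨by linarith, by nlinarith⟩
  have hc0 : (0:ℝ) ≤ z ^ 2 * (1 - t ^ 2) / t ^ 2 :=
    div_nonneg (mul_nonneg (sq_nonneg z) (by nlinarith)) (by positivity)
  rw [hset, vol_ann _ _ hc0 (by rw [div_le_iff₀ (by positivity)]; nlinarith)]
  have harith : π * (1 - z ^ 2 - z ^ 2 * (1 - t ^ 2) / t ^ 2) = π * (1 - z ^ 2 / t ^ 2) := by
    have h : (t:ℝ) ^ 2 ≠ 0 := by positivity
    rw [mul_comm (z ^ 2) (1 - t ^ 2)]
    have : (1 - t ^ 2) * z ^ 2 / t ^ 2 = z ^ 2 / t ^ 2 - z ^ 2 := by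
      field_simp
    rw [this]
    ring
  rw [harith]

-- case c : 0 ≤ t, z outside
lemma slice_c {t z : ℝ} (ht0 : 0 ≤ t) (ht1 : t ≤ 1)
    (hz : z ≤ -1 ∨ (0 < z ∧ t < z)) : volume (SL t z) = 0 := by
  have : SL t z = ∅ := by
    ext v
    simp only [SL, Set.mem_setOf_eq, Set.mem_empty_iff_false, iff_false, not_and, not_le]
    intro h1
    have hq : 0 ≤ v 0 ^ 2 + v 1 ^ 2 := by positivity
    rcases hz with h | ⟨hz0, htz⟩
    · nlinarith
    · have hs0 : 0 ≤ Real.sqrt (z ^ 2 + (v 0 ^ 2 + v 1 ^ 2)) := Real.sqrt_nonneg _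
      have hs1 : Real.sqrt (z ^ 2 + (v 0 ^ 2 + v 1 ^ 2)) < 1 := by
        rw [show (1:ℝ) = Real.sqrt 1 by simp]
        exact Real.sqrt_lt_sqrt (by positivity) (by linarith)
      calc t * Real.sqrt (z ^ 2 + (v 0 ^ 2 + v 1 ^ 2)) ≤ t * 1 := by nlinarith
        _ < z := by linarith
  rw [this]; simp

-- case d : -1 ≤ t < 0, -1 < z ≤ t
lemma slice_d {t z : ℝ} (ht0 : t < 0) (hz : z ∈ Ioc (-1 : ℝ) t) :
    volume (SL t z) = ENNReal.ofReal (π * (1 - z ^ 2)) := by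
  obtain ⟨hz1, hzt⟩ := hz
  have hz0 : z ≤ 0 := hzt.trans ht0.le
  rw [SL_transfer]
  have hsq : ∀ x : E2, Real.sqrt (z ^ 2 + ‖x‖ ^ 2) ^ 2 = z ^ 2 + ‖x‖ ^ 2 :=
    fun x => Real.sq_sqrt (by positivity)
  have hset : {x : E2 | z ^ 2 + ‖x‖ ^ 2 < 1 ∧ z ≤ t * Real.sqrt (z ^ 2 + ‖x‖ ^ 2)}
      = {x : E2 | ‖x‖ ^ 2 < 1 - z ^ 2} := by
    ext x
    have h2 := nonpos_le_mul_sqrt_iff (s := Real.sqrt (z ^ 2 + ‖x‖ ^ 2)) hz0 ht0.le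
      (Real.sqrt_nonneg _)
    rw [hsq x] at h2
    simp only [Set.mem_setOf_eq, h2]
    constructor
    · intro h; linarith [h.1]
    · intro h
      have ht2 : t ^ 2 ≤ z ^ 2 := by nlinarith
      exact ⟨by linarith, by nlinarith⟩
  rw [hset, vol_ball_sq _ (by nlinarith)]

-- case e : -1 ≤ t < 0, t < z ≤ 0
lemma slice_e {t z : ℝ} (ht1 : -1 ≤ t) (ht0 : t < 0) (hz : z ∈ Ioc t (0 : ℝ)) :
    volume (SL t z) = ENNReal.ofReal (π * (z ^ 2 * (1 - t ^ 2) / t ^ 2)) := by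
  obtain ⟨hzt, hz0⟩ := hz
  rw [SL_transfer]
  have hsq : ∀ x : E2, Real.sqrt (z ^ 2 + ‖x‖ ^ 2) ^ 2 = z ^ 2 + ‖x‖ ^ 2 :=
    fun x => Real.sq_sqrt (by positivity)
  have hz2t2 : z ^ 2 < t ^ 2 := by nlinarith
  have hset : {x : E2 | z ^ 2 + ‖x‖ ^ 2 < 1 ∧ z ≤ t * Real.sqrt (z ^ 2 + ‖x‖ ^ 2)}
      = {x : E2 | ‖x‖ ^ 2 ≤ z ^ 2 * (1 - t ^ 2) / t ^ 2 ∧ ‖x‖ ^ 2 < 1 - z ^ 2} := by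
    ext x
    have h2 := nonpos_le_mul_sqrt_iff (s := Real.sqrt (z ^ 2 + ‖x‖ ^ 2)) hz0 ht0.le
      (Real.sqrt_nonneg _)
    rw [hsq x] at h2
    simp only [Set.mem_setOf_eq, h2]
    constructor
    · rintro ⟨h1, h3⟩
      refine ⟨?_, by linarith⟩
      rw [le_div_iff₀ (by nlinarith : (0:ℝ) < t ^ 2)]
      nlinarith
    · rintro ⟨h1, h3⟩
      rw [le_div_iff₀ (by nlinarith : (0:ℝ) < t ^ 2)] at h1
      exact ⟨by linarith, by nlinarith⟩
  have hc0 : (0:ℝ) ≤ z ^ 2 * (1 - t ^ 2) / t ^ 2 :=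
    div_nonneg (mul_nonneg (sq_nonneg z) (by nlinarith)) (by nlinarith)
  rw [hset, vol_cball_sq _ _ hc0 ?_]
  rw [div_lt_iff₀ (by nlinarith : (0:ℝ) < t ^ 2)]
  nlinarith

-- case f : t < 0, z outside
lemma slice_f {t z : ℝ} (ht0 : t < 0) (hz : z ≤ -1 ∨ 0 < z) : volume (SL t z) = 0 := by
  have : SL t z = ∅ := by
    ext v
    simp only [SL, Set.mem_setOf_eq, Set.mem_empty_iff_false, iff_false, not_and, not_le]
    intro h1
    have hq : 0 ≤ v 0 ^ 2 + v 1 ^ 2 := by positivity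
    rcases hz with h | h
    · nlinarith
    · have hs0 : 0 ≤ Real.sqrt (z ^ 2 + (v 0 ^ 2 + v 1 ^ 2)) := Real.sqrt_nonneg _
      nlinarith
  rw [this]; simp

lemma integral_quad (a b p q : ℝ) (hab : a ≤ b) :
    ∫ x in Ioc a b, (p + q * x ^ 2) = p * (b - a) + q * (b ^ 3 - a ^ 3) / 3 := by
  rw [← intervalIntegral.integral_of_le hab,
    intervalIntegral.integral_add intervalIntegrable_const
      ((intervalIntegral.intervalIntegrable_pow 2).const_mul q),
    intervalIntegral.integral_const, intervalIntegral.integral_const_mul, integral_pow]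
  simp only [smul_eq_mul]
  ring

lemma lint_quad (a b p q : ℝ) (hab : a ≤ b) (hnn : ∀ x ∈ Ioc a b, 0 ≤ p + q * x ^ 2) :
    ∫⁻ z in Ioc a b, ENNReal.ofReal (p + q * z ^ 2)
      = ENNReal.ofReal (p * (b - a) + q * (b ^ 3 - a ^ 3) / 3) := by
  rw [← ofReal_integral_eq_lintegral_ofReal
      ((by fun_prop : Continuous fun x : ℝ => p + q * x ^ 2).integrableOn_Ioc)
      ((ae_restrict_mem measurableSet_Ioc).mono hnn),
    integral_quad a b p q hab]

lemma vol_cone_pi (t : ℝ) (ht : t ∈ Icc (-1 : ℝ) 1) :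
    volume {w : Fin 3 → ℝ | w 0 ^ 2 + (w 1 ^ 2 + w 2 ^ 2) < 1 ∧
      w 0 ≤ t * Real.sqrt (w 0 ^ 2 + (w 1 ^ 2 + w 2 ^ 2))}
      = ENNReal.ofReal (2 * π / 3 * (1 + t)) := by
  obtain ⟨ht1, ht2⟩ := ht
  set B : Set (ℝ × (Fin 2 → ℝ)) :=
    {p | p.1 ^ 2 + (p.2 0 ^ 2 + p.2 1 ^ 2) < 1 ∧
      p.1 ≤ t * Real.sqrt (p.1 ^ 2 + (p.2 0 ^ 2 + p.2 1 ^ 2))} with hB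
  have hBmeas : MeasurableSet B := by
    have m1 : Measurable fun p : ℝ × (Fin 2 → ℝ) =>
        p.1 ^ 2 + (p.2 0 ^ 2 + p.2 1 ^ 2) := by fun_prop
    have m2 : Measurable fun p : ℝ × (Fin 2 → ℝ) =>
        t * Real.sqrt (p.1 ^ 2 + (p.2 0 ^ 2 + p.2 1 ^ 2)) := by fun_prop
    exact (measurableSet_lt m1 measurable_const).inter (measurableSet_le measurable_fst m2)
  have hpre : (MeasurableEquiv.piFinSuccAbove (fun _ : Fin 3 => ℝ) 0) ⁻¹' B
      = {w : Fin 3 → ℝ | w 0 ^ 2 + (w 1 ^ 2 + w 2 ^ 2) < 1 ∧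
        w 0 ≤ t * Real.sqrt (w 0 ^ 2 + (w 1 ^ 2 + w 2 ^ 2))} := by
    ext w
    simp only [hB, Set.mem_preimage, MeasurableEquiv.piFinSuccAbove_apply, Set.mem_setOf_eq,
      Fin.insertNthEquiv, Equiv.coe_fn_symm_mk, Fin.removeNth, Fin.zero_succAbove,
      Fin.succ_zero_eq_one, Fin.succ_one_eq_two]
  rw [← hpre,
    (volume_preserving_piFinSuccAbove (fun _ : Fin 3 => ℝ) 0).measure_preimage
      hBmeas.nullMeasurableSet,
    Measure.volume_eq_prod, Measure.prod_apply hBmeas]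
  have hslice : ∀ z : ℝ, (Prod.mk z ⁻¹' B) = SL t z := fun z => rfl
  simp only [hslice]
  rcases le_or_gt 0 t with h0 | h0
  · -- t ≥ 0
    have hfun : ∀ z : ℝ, volume (SL t z) =
        (Ioc (-1 : ℝ) 0).indicator (fun z => ENNReal.ofReal (π + (-π) * z ^ 2)) z
        + (Ioc (0 : ℝ) t).indicator
            (fun z => ENNReal.ofReal (π + (-(π / t ^ 2)) * z ^ 2)) z := by
      intro z
      by_cases h1 : z ∈ Ioc (-1 : ℝ) 0
      · rw [Set.indicator_of_mem h1, Set.indicator_of_notMem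
            (by simp only [Set.mem_Ioc, not_and_or, not_lt]; exact Or.inl h1.2),
          add_zero, slice_a h0 h1]
        congr 1; ring
      · by_cases h2 : z ∈ Ioc (0 : ℝ) t
        · rw [Set.indicator_of_notMem h1, Set.indicator_of_mem h2, zero_add,
            slice_b (h2.1.trans_le h2.2) ht2 h2]
          congr 1; ring
        · rw [Set.indicator_of_notMem h1, Set.indicator_of_notMem h2, add_zero]
          apply slice_c h0 ht2
          simp only [Set.mem_Ioc, not_and_or, not_lt, not_le] at h1 h2
          rcases le_or_gt z 0 with hz0 | hz0
          · rcases h1 with h | h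
            · exact Or.inl h
            · exact absurd hz0 (not_le.mpr h)
          · rcases h2 with h | h
            · exact absurd hz0 (not_lt.mpr h)
            · exact Or.inr ⟨hz0, h⟩
    have hm1 : Measurable fun z : ℝ =>
        (Ioc (-1 : ℝ) 0).indicator (fun z => ENNReal.ofReal (π + (-π) * z ^ 2)) z :=
      (ENNReal.measurable_ofReal.comp (by fun_prop)).indicator measurableSet_Ioc
    have nn1 : ∀ x ∈ Ioc (-1 : ℝ) 0, 0 ≤ π + (-π) * x ^ 2 := by
      intro x hx
      obtain ⟨ha, hb⟩ := hx
      nlinarith [pi_pos, mul_nonneg (neg_nonneg.mpr hb) (by linarith : (0:ℝ) ≤ 1 + x)]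
    have nn2 : ∀ x ∈ Ioc (0 : ℝ) t, 0 ≤ π + (-(π / t ^ 2)) * x ^ 2 := by
      intro x hx
      obtain ⟨ha, hb⟩ := hx
      have h0pos : 0 < t := ha.trans_le hb
      have hx2 : x ^ 2 ≤ t ^ 2 := by nlinarith
      have : π / t ^ 2 * x ^ 2 ≤ π := by
        rw [div_mul_eq_mul_div, div_le_iff₀ (by positivity)]
        nlinarith [pi_pos]
      linarith
    have hX : 0 ≤ π * (0 - (-1)) + (-π) * ((0:ℝ) ^ 3 - (-1) ^ 3) / 3 := by
      have e : π * (0 - (-1)) + (-π) * ((0:ℝ) ^ 3 - (-1) ^ 3) / 3 = 2 * π / 3 := by ring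
      rw [e]; positivity
    have hY : 0 ≤ π * (t - 0) + (-(π / t ^ 2)) * (t ^ 3 - (0:ℝ) ^ 3) / 3 := by
      rcases eq_or_lt_of_le h0 with rfl | h0pos
      · norm_num
      · have e : π * (t - 0) + (-(π / t ^ 2)) * (t ^ 3 - (0:ℝ) ^ 3) / 3 = 2 * π * t / 3 := by
          field_simp; ring
        rw [e]; positivity
    rw [lintegral_congr hfun, lintegral_add_left hm1,
      lintegral_indicator measurableSet_Ioc _, lintegral_indicator measurableSet_Ioc _,
      lint_quad _ _ _ _ (by norm_num) nn1,
      lint_quad _ _ _ _ h0 nn2, ← ENNReal.ofReal_add hX hY]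
    congr 1
    rcases eq_or_lt_of_le h0 with rfl | h0pos
    · norm_num; ring
    · have ht2' : (t:ℝ) ^ 2 ≠ 0 := pow_ne_zero 2 h0pos.ne'
      field_simp
      ring
  · -- t < 0
    have hfun : ∀ z : ℝ, volume (SL t z) =
        (Ioc (-1 : ℝ) t).indicator (fun z => ENNReal.ofReal (π + (-π) * z ^ 2)) z
        + (Ioc t (0 : ℝ)).indicator
            (fun z => ENNReal.ofReal (0 + π * (1 - t ^ 2) / t ^ 2 * z ^ 2)) z := by
      intro z
      by_cases h1 : z ∈ Ioc (-1 : ℝ) t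
      · rw [Set.indicator_of_mem h1, Set.indicator_of_notMem
            (by simp only [Set.mem_Ioc, not_and_or, not_lt]; exact Or.inl h1.2),
          add_zero, slice_d h0 h1]
        congr 1; ring
      · by_cases h2 : z ∈ Ioc t (0 : ℝ)
        · rw [Set.indicator_of_notMem h1, Set.indicator_of_mem h2, zero_add,
            slice_e ht1 h0 h2]
          congr 1; ring
        · rw [Set.indicator_of_notMem h1, Set.indicator_of_notMem h2, add_zero]
          apply slice_f h0
          simp only [Set.mem_Ioc, not_and_or, not_lt, not_le] at h1 h2
          rcases h2 with h | h
          · rcases h1 with h' | h'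
            · exact Or.inl h'
            · exact absurd h (not_le.mpr h')
          · exact Or.inr h
    have hm1 : Measurable fun z : ℝ =>
        (Ioc (-1 : ℝ) t).indicator (fun z => ENNReal.ofReal (π + (-π) * z ^ 2)) z :=
      (ENNReal.measurable_ofReal.comp (by fun_prop)).indicator measurableSet_Ioc
    have hq0 : 0 ≤ π * (1 - t ^ 2) / t ^ 2 :=
      div_nonneg (mul_nonneg pi_nonneg (by nlinarith)) (sq_nonneg t)
    have ht2' : (t:ℝ) ^ 2 ≠ 0 := pow_ne_zero 2 h0.ne
    have nn1 : ∀ x ∈ Ioc (-1 : ℝ) t, 0 ≤ π + (-π) * x ^ 2 := by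
      intro x hx
      obtain ⟨ha, hb⟩ := hx
      have hb' : x ≤ 0 := hb.trans h0.le
      nlinarith [pi_pos, mul_nonneg (neg_nonneg.mpr hb') (by linarith : (0:ℝ) ≤ 1 + x)]
    have nn2 : ∀ x ∈ Ioc t (0 : ℝ), 0 ≤ 0 + π * (1 - t ^ 2) / t ^ 2 * x ^ 2 := by
      intro x _
      have := mul_nonneg hq0 (sq_nonneg x)
      linarith
    have hX : 0 ≤ π * (t - (-1)) + (-π) * (t ^ 3 - (-1) ^ 3) / 3 := by
      nlinarith [pi_pos, mul_nonneg (mul_nonneg pi_nonneg (sq_nonneg (t + 1)))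
        (by linarith : (0:ℝ) ≤ 2 - t)]
    have hY : 0 ≤ 0 * ((0:ℝ) - t) + π * (1 - t ^ 2) / t ^ 2 * ((0:ℝ) ^ 3 - t ^ 3) / 3 := by
      have h1 : (0:ℝ) ≤ (0:ℝ) ^ 3 - t ^ 3 := by nlinarith
      have := mul_nonneg (mul_nonneg hq0 h1) (by norm_num : (0:ℝ) ≤ 1/3)
      nlinarith [this]
    rw [lintegral_congr hfun, lintegral_add_left hm1,
      lintegral_indicator measurableSet_Ioc _, lintegral_indicator measurableSet_Ioc _,
      lint_quad _ _ _ _ (by linarith) nn1,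
      lint_quad _ _ _ _ h0.le nn2, ← ENNReal.ofReal_add hX hY]
    congr 1
    have ht0' : t ≠ 0 := h0.ne
    field_simp
    ring


instance : IsFiniteMeasure sphMeasure := by
  unfold sphMeasure; infer_instance

lemma vol_cone_E3 (u : E3) (hu : ‖u‖ = 1) (t : ℝ) (ht : t ∈ Icc (-1 : ℝ) 1) :
    volume {x : E3 | ‖x‖ < 1 ∧ (inner ℝ u x : ℝ) ≤ t * ‖x‖}
      = ENNReal.ofReal (2 * π / 3 * (1 + t)) := by
  have hcard : Module.finrank ℝ E3 = Fintype.card (Fin 3) := by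
    simp [finrank_euclideanSpace]
  have horth : Orthonormal ℝ (({0} : Set (Fin 3)).restrict (fun _ : Fin 3 => u)) := by
    constructor
    · intro i; exact hu
    · intro i j hij
      exfalso
      exact hij (Subtype.ext (by rw [i.2, j.2]))
  obtain ⟨b, hb⟩ := horth.exists_orthonormalBasis_extension_of_card_eq hcard
  have hbu : b 0 = u := hb 0 rfl
  -- the cone in coordinates
  have hnorm : ∀ x : E3, ‖x‖ = Real.sqrt (x 0 ^ 2 + (x 1 ^ 2 + x 2 ^ 2)) := by
    intro x
    rw [EuclideanSpace.norm_eq]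
    congr 1
    rw [Fin.sum_univ_three]
    simp only [Real.norm_eq_abs, sq_abs]
    ring
  have hpre2 : ((MeasurableEquiv.toLp 2 (Fin 3 → ℝ)).symm) ⁻¹'
      {w : Fin 3 → ℝ | w 0 ^ 2 + (w 1 ^ 2 + w 2 ^ 2) < 1 ∧
        w 0 ≤ t * Real.sqrt (w 0 ^ 2 + (w 1 ^ 2 + w 2 ^ 2))}
      = {y : E3 | ‖y‖ < 1 ∧ y 0 ≤ t * ‖y‖} := by
    ext y
    have h1 : ‖y‖ < 1 ↔ y 0 ^ 2 + (y 1 ^ 2 + y 2 ^ 2) < 1 := by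
      rw [hnorm y, Real.sqrt_lt' one_pos, one_pow]
    simp only [Set.mem_preimage, Set.mem_setOf_eq, MeasurableEquiv.toLp_symm_apply]
    rw [h1, hnorm y]
  have hmeaspi : MeasurableSet {w : Fin 3 → ℝ | w 0 ^ 2 + (w 1 ^ 2 + w 2 ^ 2) < 1 ∧
      w 0 ≤ t * Real.sqrt (w 0 ^ 2 + (w 1 ^ 2 + w 2 ^ 2))} := by
    have m1 : Measurable fun w : Fin 3 → ℝ => w 0 ^ 2 + (w 1 ^ 2 + w 2 ^ 2) := by fun_prop
    have m2 : Measurable fun w : Fin 3 → ℝ =>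
        t * Real.sqrt (w 0 ^ 2 + (w 1 ^ 2 + w 2 ^ 2)) := by fun_prop
    exact (measurableSet_lt m1 measurable_const).inter
      (measurableSet_le (measurable_pi_apply 0) m2)
  have hC' : volume {y : E3 | ‖y‖ < 1 ∧ y 0 ≤ t * ‖y‖}
      = ENNReal.ofReal (2 * π / 3 * (1 + t)) := by
    rw [← hpre2, (EuclideanSpace.volume_preserving_symm_measurableEquiv_toLp (Fin 3)).measure_preimage
      hmeaspi.nullMeasurableSet]
    exact vol_cone_pi t ht
  have hpre1 : {x : E3 | ‖x‖ < 1 ∧ (inner ℝ u x : ℝ) ≤ t * ‖x‖}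
      = b.repr ⁻¹' {y : E3 | ‖y‖ < 1 ∧ y 0 ≤ t * ‖y‖} := by
    ext x
    simp only [Set.mem_setOf_eq, Set.mem_preimage]
    rw [b.repr.norm_map, b.repr_apply_apply, hbu]
  have hmeasE : MeasurableSet {y : E3 | ‖y‖ < 1 ∧ y 0 ≤ t * ‖y‖} := by
    have m1 : Measurable fun y : E3 => ‖y‖ := measurable_norm
    have m2 : Measurable fun y : E3 => y 0 := by
      exact (measurable_pi_apply 0).comp ((MeasurableEquiv.toLp 2 (Fin 3 → ℝ)).symm).measurable
    exact (measurableSet_lt m1 measurable_const).inter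
      (measurableSet_le m2 (measurable_const.mul m1))
  rw [hpre1, b.measurePreserving_repr.measure_preimage hmeasE.nullMeasurableSet]
  exact hC'

lemma sph_cone_vol (u : E3) (hu : ‖u‖ = 1) (t : ℝ) (ht : t ∈ Icc (-1 : ℝ) 1) :
    sphMeasure {σ : S2 | (inner ℝ u (σ : E3) : ℝ) ≤ t} = ENNReal.ofReal (2 * π * (1 + t)) := by
  have hmeasS : MeasurableSet {σ : S2 | (inner ℝ u (σ : E3) : ℝ) ≤ t} := by
    have : Continuous fun σ : S2 => (inner ℝ u (σ : E3) : ℝ) :=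
      Continuous.inner continuous_const continuous_subtype_val
    exact (isClosed_le this continuous_const).measurableSet
  have hsmul : Ioo (0 : ℝ) 1 • (Subtype.val '' {σ : S2 | (inner ℝ u (σ : E3) : ℝ) ≤ t})
      = {x : E3 | ‖x‖ < 1 ∧ (inner ℝ u x : ℝ) ≤ t * ‖x‖} \ {0} := by
    ext x
    rw [Set.mem_smul]
    constructor
    · rintro ⟨r, hr, y, ⟨σ, hσ, rfl⟩, rfl⟩
      have hσ1 : ‖(σ : E3)‖ = 1 := mem_sphere_zero_iff_norm.mp σ.2
      have hrn : ‖r • (σ : E3)‖ = r := by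
        rw [norm_smul, hσ1, mul_one, Real.norm_eq_abs, abs_of_pos hr.1]
      refine ⟨⟨by rw [hrn]; exact hr.2, ?_⟩, ?_⟩
      · rw [real_inner_smul_right, hrn]
        calc r * (inner ℝ u (σ : E3) : ℝ) ≤ r * t := by
              exact mul_le_mul_of_nonneg_left hσ hr.1.le
          _ = t * r := mul_comm _ _
      · simp only [Set.mem_singleton_iff]
        intro h0
        rw [h0, norm_zero] at hrn
        exact hr.1.ne hrn
    · rintro ⟨⟨hx1, hx2⟩, hx0⟩
      have hx0' : x ≠ 0 := hx0
      have hxpos : 0 < ‖x‖ := norm_pos_iff.mpr hx0'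
      have hσmem : ‖x‖⁻¹ • x ∈ Metric.sphere (0 : E3) 1 := by
        rw [mem_sphere_zero_iff_norm, norm_smul, Real.norm_eq_abs, abs_inv,
          abs_of_pos hxpos, inv_mul_cancel₀ hxpos.ne']
      refine ⟨‖x‖, ⟨hxpos, hx1⟩, ‖x‖⁻¹ • x, ⟨⟨_, hσmem⟩, ?_, rfl⟩, ?_⟩
      · simp only [Set.mem_setOf_eq]
        rw [real_inner_smul_right]
        calc ‖x‖⁻¹ * (inner ℝ u x : ℝ) ≤ ‖x‖⁻¹ * (t * ‖x‖) :=
              mul_le_mul_of_nonneg_left hx2 (inv_nonneg.mpr hxpos.le)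
          _ = t := by field_simp
      · exact smul_inv_smul₀ hxpos.ne' x
  have hfr : (Module.finrank ℝ E3 : ℝ≥0∞) = 3 := by
    simp [finrank_euclideanSpace]
  rw [sphMeasure, Measure.toSphere_apply' _ hmeasS, hsmul,
    measure_diff_null (measure_singleton 0), vol_cone_E3 u hu t ht]
  rw [show (Module.finrank ℝ E3) = 3 from by simp [finrank_euclideanSpace]]
  rw [show ((3 : ℕ) : ℝ≥0∞) = ENNReal.ofReal 3 from by simp, ← ENNReal.ofReal_mul (by norm_num)]
  congr 1
  ring

lemma inner_continuous_S2 (u : E3) : Continuous fun σ : S2 => (inner ℝ u (σ : E3) : ℝ) :=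
  Continuous.inner continuous_const continuous_subtype_val

lemma inner_le_one_S2 (u : E3) (hu : ‖u‖ = 1) (σ : S2) : (inner ℝ u (σ : E3) : ℝ) ≤ 1 := by
  have h := real_inner_le_norm u (σ : E3)
  rwa [hu, mem_sphere_zero_iff_norm.mp σ.2, one_mul] at h

lemma neg_one_le_inner_S2 (u : E3) (hu : ‖u‖ = 1) (σ : S2) : -1 ≤ (inner ℝ u (σ : E3) : ℝ) := by
  have h := abs_real_inner_le_norm u (σ : E3)
  rw [hu, mem_sphere_zero_iff_norm.mp σ.2, one_mul] at h
  linarith [neg_abs_le (inner ℝ u (σ : E3) : ℝ)]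

lemma map_inner_sph (u : E3) (hu : ‖u‖ = 1) :
    Measure.map (fun σ : S2 => (inner ℝ u (σ : E3) : ℝ)) sphMeasure
      = ENNReal.ofReal (2 * π) • (volume : Measure ℝ).restrict (Ioc (-1 : ℝ) 1) := by
  have hmeas : Measurable fun σ : S2 => (inner ℝ u (σ : E3) : ℝ) :=
    (inner_continuous_S2 u).measurable
  have : IsFiniteMeasure (Measure.map (fun σ : S2 => (inner ℝ u (σ : E3) : ℝ)) sphMeasure) :=
    Measure.isFiniteMeasure_map _ _
  refine Measure.ext_of_Iic _ _ fun a => ?_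
  rw [Measure.map_apply hmeas measurableSet_Iic, Measure.smul_apply,
    Measure.restrict_apply measurableSet_Iic]
  have hIic : Iic a ∩ Ioc (-1 : ℝ) 1 = Ioc (-1 : ℝ) (min 1 a) := by
    rw [Set.inter_comm, Set.Ioc_inter_Iic]
  rw [hIic, Real.volume_Ioc, smul_eq_mul]
  rcases le_total a (-1) with ha | ha
  · -- a ≤ -1 : both sides 0
    have h1 : min 1 a ≤ -1 := le_trans (min_le_right _ _) ha
    have hrhs : ENNReal.ofReal (min 1 a - -1) = 0 := by
      rw [ENNReal.ofReal_eq_zero]; linarith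
    rw [hrhs, mul_zero]
    -- LHS ≤ cap at -1 which is 0
    have hsub : (fun σ : S2 => (inner ℝ u (σ : E3) : ℝ)) ⁻¹' Iic a
        ⊆ {σ : S2 | (inner ℝ u (σ : E3) : ℝ) ≤ -1} := by
      intro σ hσ
      exact le_trans hσ ha
    have hcap := sph_cone_vol u hu (-1) (by constructor <;> norm_num)
    have : sphMeasure {σ : S2 | (inner ℝ u (σ : E3) : ℝ) ≤ -1} = 0 := by
      rw [hcap]; norm_num
    exact le_antisymm (le_trans (measure_mono hsub) this.le) (by simp)
  · rcases le_total a 1 with ha2 | ha2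
    · -- -1 ≤ a ≤ 1
      have : (fun σ : S2 => (inner ℝ u (σ : E3) : ℝ)) ⁻¹' Iic a
          = {σ : S2 | (inner ℝ u (σ : E3) : ℝ) ≤ a} := rfl
      rw [this, sph_cone_vol u hu a ⟨ha, ha2⟩, min_eq_right ha2,
        ← ENNReal.ofReal_mul (by positivity)]
      congr 1
      ring
    · -- a ≥ 1 : preimage is everything; equals cap at 1
      have : (fun σ : S2 => (inner ℝ u (σ : E3) : ℝ)) ⁻¹' Iic a
          = {σ : S2 | (inner ℝ u (σ : E3) : ℝ) ≤ 1} := by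
        ext σ
        simp only [Set.mem_preimage, Set.mem_Iic, Set.mem_setOf_eq]
        exact ⟨fun _ => inner_le_one_S2 u hu σ, fun h => h.trans ha2⟩
      rw [this, sph_cone_vol u hu 1 (by constructor <;> norm_num), min_eq_left ha2,
        ← ENNReal.ofReal_mul (by positivity)]
      congr 1
      ring

lemma sph_ae_Ioo (u : E3) (hu : ‖u‖ = 1) :
    ∀ᵐ σ : S2 ∂sphMeasure, (inner ℝ u (σ : E3) : ℝ) ∈ Ioo (-1 : ℝ) 1 := by
  have hmeas : Measurable fun σ : S2 => (inner ℝ u (σ : E3) : ℝ) :=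
    (inner_continuous_S2 u).measurable
  have hset : {σ : S2 | ¬ (inner ℝ u (σ : E3) : ℝ) ∈ Ioo (-1 : ℝ) 1}
      = (fun σ : S2 => (inner ℝ u (σ : E3) : ℝ)) ⁻¹' (Ioo (-1 : ℝ) 1)ᶜ := rfl
  rw [ae_iff]
  rw [hset, ← Measure.map_apply hmeas (measurableSet_Ioo.compl), map_inner_sph u hu,
    Measure.smul_apply, Measure.restrict_apply measurableSet_Ioo.compl]
  have : (Ioo (-1 : ℝ) 1)ᶜ ∩ Ioc (-1 : ℝ) 1 = {1} := by
    ext x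
    simp only [Set.mem_inter_iff, Set.mem_compl_iff, Set.mem_Ioo, Set.mem_Ioc,
      Set.mem_singleton_iff, not_and_or, not_lt]
    constructor
    · rintro ⟨h1 | h1, h2, h3⟩
      · linarith
      · linarith
    · rintro rfl
      exact ⟨Or.inr le_rfl, by norm_num, le_rfl⟩
  rw [this]
  simp

lemma sph_integral (u : E3) (hu : ‖u‖ = 1) (F : ℝ → ℝ)
    (hF : AEStronglyMeasurable F ((volume : Measure ℝ).restrict (Ioc (-1 : ℝ) 1))) :
    ∫ σ, F ((inner ℝ u (σ : E3) : ℝ)) ∂sphMeasure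
      = 2 * π * ∫ s in Ioc (-1 : ℝ) 1, F s := by
  have hmeas : AEMeasurable (fun σ : S2 => (inner ℝ u (σ : E3) : ℝ)) sphMeasure :=
    (inner_continuous_S2 u).measurable.aemeasurable
  have hF' : AEStronglyMeasurable F
      (Measure.map (fun σ : S2 => (inner ℝ u (σ : E3) : ℝ)) sphMeasure) := by
    rw [map_inner_sph u hu]
    exact hF.smul_measure _
  rw [← integral_map hmeas hF', map_inner_sph u hu, integral_smul_measure,
    ENNReal.toReal_ofReal (by positivity), smul_eq_mul]

lemma sph_integrable (u : E3) (hu : ‖u‖ = 1) (F : ℝ → ℝ)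
    (hF : IntegrableOn F (Ioc (-1 : ℝ) 1)) :
    Integrable (fun σ : S2 => F ((inner ℝ u (σ : E3) : ℝ))) sphMeasure := by
  have hmeas : AEMeasurable (fun σ : S2 => (inner ℝ u (σ : E3) : ℝ)) sphMeasure :=
    (inner_continuous_S2 u).measurable.aemeasurable
  have hF2 : Integrable F (Measure.map (fun σ : S2 => (inner ℝ u (σ : E3) : ℝ)) sphMeasure) := by
    rw [map_inner_sph u hu]
    exact hF.smul_measure ENNReal.ofReal_ne_top
  have hF' : AEStronglyMeasurable F
      (Measure.map (fun σ : S2 => (inner ℝ u (σ : E3) : ℝ)) sphMeasure) := hF2.1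
  exact (integrable_map_measure hF' hmeas).mp hF2


lemma norm_exp_inner (v ξ : E3) : ‖Complex.exp (-(Complex.I * ((inner ℝ v ξ : ℝ) : ℂ)))‖ = 1 := by
  rw [Complex.norm_exp]
  simp

lemma IsCharFun.norm_le_one {φ : E3 → ℂ} (h : IsCharFun φ) (ξ : E3) : ‖φ ξ‖ ≤ 1 := by
  obtain ⟨μ, hμ, hφ⟩ := h
  rw [hφ]
  calc ‖∫ v, Complex.exp (-(Complex.I * ((inner ℝ v ξ : ℝ) : ℂ))) ∂μ‖
      ≤ 1 * (μ Set.univ).toReal :=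
        norm_integral_le_of_norm_le_const (Eventually.of_forall fun v => le_of_eq (norm_exp_inner v ξ))
    _ = 1 := by simp

lemma IsCharFun.apply_zero {φ : E3 → ℂ} (h : IsCharFun φ) : φ 0 = 1 := by
  obtain ⟨μ, hμ, hφ⟩ := h
  rw [hφ]
  simp

lemma IsCharFun.continuous {φ : E3 → ℂ} (h : IsCharFun φ) : Continuous φ := by
  obtain ⟨μ, hμ, hφ⟩ := h
  have hc : Continuous fun ξ : E3 => ∫ v, Complex.exp (-(Complex.I * ((inner ℝ v ξ : ℝ) : ℂ))) ∂μ := by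
    apply continuous_of_dominated (bound := fun _ => 1)
    · intro ξ
      exact (Complex.continuous_exp.comp ((continuous_const.mul
        (Complex.continuous_ofReal.comp ((continuous_id.inner continuous_const)))).neg)).aestronglyMeasurable
    · intro ξ
      exact Eventually.of_forall fun v => le_of_eq (norm_exp_inner v ξ)
    · exact integrable_const 1
    · exact Eventually.of_forall fun v => Complex.continuous_exp.comp
        ((continuous_const.mul (Complex.continuous_ofReal.comp
          ((continuous_const.inner continuous_id)))).neg)
  have : φ = fun ξ => ∫ v, Complex.exp (-(Complex.I * ((inner ℝ v ξ : ℝ) : ℂ))) ∂μ := funext hφ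
  rw [this]; exact hc



lemma dAlpha_triangle (α : ℝ) (φ ψ : E3 → ℂ) :
    dAlpha α φ ψ ≤ dAlpha α φ 1 + dAlpha α ψ 1 := by
  refine iSup₂_le fun ξ hξ => ?_
  have h1 : (‖φ ξ - ψ ξ‖₊ : ℝ≥0∞) ≤ (‖φ ξ - (1 : E3 → ℂ) ξ‖₊ : ℝ≥0∞)
      + (‖ψ ξ - (1 : E3 → ℂ) ξ‖₊ : ℝ≥0∞) := by
    rw [← ENNReal.coe_add]
    apply ENNReal.coe_le_coe.mpr
    have : φ ξ - ψ ξ = (φ ξ - (1 : E3 → ℂ) ξ) - (ψ ξ - (1 : E3 → ℂ) ξ) := by ring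
    rw [this]
    exact nnnorm_sub_le _ _
  calc (‖φ ξ - ψ ξ‖₊ : ℝ≥0∞) / (‖ξ‖₊ : ℝ≥0∞) ^ α
      ≤ ((‖φ ξ - (1 : E3 → ℂ) ξ‖₊ : ℝ≥0∞) + (‖ψ ξ - (1 : E3 → ℂ) ξ‖₊ : ℝ≥0∞))
        / (‖ξ‖₊ : ℝ≥0∞) ^ α := ENNReal.div_le_div_right h1 _
    _ = (‖φ ξ - (1 : E3 → ℂ) ξ‖₊ : ℝ≥0∞) / (‖ξ‖₊ : ℝ≥0∞) ^ α
        + (‖ψ ξ - (1 : E3 → ℂ) ξ‖₊ : ℝ≥0∞) / (‖ξ‖₊ : ℝ≥0∞) ^ α := ENNReal.add_div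
    _ ≤ _ := by
        gcongr
        · exact le_iSup₂ (f := fun (η : E3) (_ : η ≠ 0) =>
            (‖φ η - (1 : E3 → ℂ) η‖₊ : ℝ≥0∞) / (‖η‖₊ : ℝ≥0∞) ^ α) ξ hξ
        · exact le_iSup₂ (f := fun (η : E3) (_ : η ≠ 0) =>
            (‖ψ η - (1 : E3 → ℂ) η‖₊ : ℝ≥0∞) / (‖η‖₊ : ℝ≥0∞) ^ α) ξ hξ

lemma dAlpha_ne_top {α : ℝ} {φ ψ : E3 → ℂ} (hφ : memK α φ) (hψ : memK α ψ) :
    dAlpha α φ ψ ≠ ⊤ := by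
  refine ne_top_of_le_ne_top ?_ (dAlpha_triangle α φ ψ)
  exact ENNReal.add_ne_top.mpr ⟨hφ.2, hψ.2⟩

lemma ofReal_norm_eq_coe_nnnorm {F : Type*} [SeminormedAddCommGroup F] (a : F) :
    ENNReal.ofReal ‖a‖ = (‖a‖₊ : ℝ≥0∞) := ENNReal.ofReal_eq_coe_nnreal (norm_nonneg a)

lemma dAlpha_pointwise {α : ℝ} (hα : 0 ≤ α) {φ ψ : E3 → ℂ}
    (hφ : IsCharFun φ) (hψ : IsCharFun ψ) (hd : dAlpha α φ ψ ≠ ⊤) (η : E3) :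
    ‖φ η - ψ η‖ ≤ (dAlpha α φ ψ).toReal * ‖η‖ ^ α := by
  by_cases hη : η = 0
  · subst hη
    rw [hφ.apply_zero, hψ.apply_zero, sub_self, norm_zero]
    exact mul_nonneg ENNReal.toReal_nonneg (Real.rpow_nonneg (norm_nonneg _) _)
  · have h1 : (‖φ η - ψ η‖₊ : ℝ≥0∞) / (‖η‖₊ : ℝ≥0∞) ^ α ≤ dAlpha α φ ψ :=
      le_iSup₂ (f := fun (ζ : E3) (_ : ζ ≠ 0) =>
        (‖φ ζ - ψ ζ‖₊ : ℝ≥0∞) / (‖ζ‖₊ : ℝ≥0∞) ^ α) η hη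
    have hηnn : ‖η‖₊ ≠ 0 := nnnorm_ne_zero_iff.mpr hη
    have hb0 : ((‖η‖₊ : ℝ≥0∞)) ^ α ≠ 0 := by
      simp [ENNReal.rpow_eq_zero_iff, hηnn]
    have hbtop : ((‖η‖₊ : ℝ≥0∞)) ^ α ≠ ⊤ := by
      simp [ENNReal.rpow_eq_top_iff, hηnn]
    have h2 : (‖φ η - ψ η‖₊ : ℝ≥0∞) ≤ dAlpha α φ ψ * (‖η‖₊ : ℝ≥0∞) ^ α :=
      (ENNReal.div_le_iff hb0 hbtop).mp h1
    have h3 := ENNReal.toReal_mono (by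
      exact ENNReal.mul_ne_top hd hbtop) h2
    rw [ENNReal.toReal_mul] at h3
    rw [← ofReal_norm_eq_coe_nnnorm] at h3
    rw [ENNReal.toReal_ofReal (norm_nonneg _)] at h3
    convert h3 using 2
    rw [← ENNReal.toReal_rpow]
    simp

lemma norm_unit (ξ : E3) (hξ : ξ ≠ 0) : ‖‖ξ‖⁻¹ • ξ‖ = 1 := by
  rw [norm_smul, Real.norm_eq_abs, abs_inv, abs_of_pos (norm_pos_iff.mpr hξ),
    inv_mul_cancel₀ (norm_pos_iff.mpr hξ).ne']

lemma kern_arg_eq (ξ : E3) (σ : S2) :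
    (inner ℝ ξ (σ : E3) : ℝ) / ‖ξ‖ = (inner ℝ (‖ξ‖⁻¹ • ξ) (σ : E3) : ℝ) := by
  rw [real_inner_smul_left, div_eq_inv_mul]

lemma norm_xiP_eq (ξ : E3) (hξ : ξ ≠ 0) (σ : S2) :
    ‖xiP ξ σ‖ = ‖ξ‖ * Real.sqrt ((1 + (inner ℝ (‖ξ‖⁻¹ • ξ) (σ : E3) : ℝ)) / 2) := by
  set s : ℝ := (inner ℝ (‖ξ‖⁻¹ • ξ) (σ : E3) : ℝ) with hs
  have hu : ‖‖ξ‖⁻¹ • ξ‖ = 1 := norm_unit ξ hξ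
  have hs1 : -1 ≤ s := neg_one_le_inner_S2 _ hu σ
  have hσ1 : ‖(σ : E3)‖ = 1 := mem_sphere_zero_iff_norm.mp σ.2
  have hξ0 : (0 : ℝ) < ‖ξ‖ := norm_pos_iff.mpr hξ
  have hinner : (inner ℝ ξ (σ : E3) : ℝ) = ‖ξ‖ * s := by
    rw [hs, real_inner_smul_left, ← mul_assoc, mul_inv_cancel₀ hξ0.ne', one_mul]
  have hsq : ‖xiP ξ σ‖ ^ 2 = (‖ξ‖ * Real.sqrt ((1 + s) / 2)) ^ 2 := by
    rw [xiP, norm_smul, mul_pow, norm_add_sq_real, real_inner_smul_right, hinner, norm_smul,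
      norm_norm, hσ1, mul_one, mul_pow,
      Real.sq_sqrt (by linarith : (0:ℝ) ≤ (1 + s) / 2), Real.norm_eq_abs,
      show |(2:ℝ)⁻¹| = 2⁻¹ from abs_of_pos (by norm_num)]
    ring
  calc ‖xiP ξ σ‖ = Real.sqrt (‖xiP ξ σ‖ ^ 2) := (Real.sqrt_sq (norm_nonneg _)).symm
    _ = Real.sqrt ((‖ξ‖ * Real.sqrt ((1 + s) / 2)) ^ 2) := by rw [hsq]
    _ = ‖ξ‖ * Real.sqrt ((1 + s) / 2) :=
        Real.sqrt_sq (mul_nonneg (norm_nonneg _) (Real.sqrt_nonneg _))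

lemma norm_xiM_eq (ξ : E3) (hξ : ξ ≠ 0) (σ : S2) :
    ‖xiM ξ σ‖ = ‖ξ‖ * Real.sqrt ((1 - (inner ℝ (‖ξ‖⁻¹ • ξ) (σ : E3) : ℝ)) / 2) := by
  set s : ℝ := (inner ℝ (‖ξ‖⁻¹ • ξ) (σ : E3) : ℝ) with hs
  have hu : ‖‖ξ‖⁻¹ • ξ‖ = 1 := norm_unit ξ hξ
  have hs2 : s ≤ 1 := inner_le_one_S2 _ hu σ
  have hσ1 : ‖(σ : E3)‖ = 1 := mem_sphere_zero_iff_norm.mp σ.2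
  have hξ0 : (0 : ℝ) < ‖ξ‖ := norm_pos_iff.mpr hξ
  have hinner : (inner ℝ ξ (σ : E3) : ℝ) = ‖ξ‖ * s := by
    rw [hs, real_inner_smul_left, ← mul_assoc, mul_inv_cancel₀ hξ0.ne', one_mul]
  have hsq : ‖xiM ξ σ‖ ^ 2 = (‖ξ‖ * Real.sqrt ((1 - s) / 2)) ^ 2 := by
    rw [xiM, norm_smul, mul_pow, norm_sub_sq_real, real_inner_smul_right, hinner, norm_smul,
      norm_norm, hσ1, mul_one, mul_pow,
      Real.sq_sqrt (by linarith : (0:ℝ) ≤ (1 - s) / 2), Real.norm_eq_abs,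
      show |(2:ℝ)⁻¹| = 2⁻¹ from abs_of_pos (by norm_num)]
    ring
  calc ‖xiM ξ σ‖ = Real.sqrt (‖xiM ξ σ‖ ^ 2) := (Real.sqrt_sq (norm_nonneg _)).symm
    _ = Real.sqrt ((‖ξ‖ * Real.sqrt ((1 - s) / 2)) ^ 2) := by rw [hsq]
    _ = ‖ξ‖ * Real.sqrt ((1 - s) / 2) :=
        Real.sqrt_sq (mul_nonneg (norm_nonneg _) (Real.sqrt_nonneg _))

lemma sqrt_rpow_half (x : ℝ) (hx : 0 ≤ x) (α : ℝ) :
    Real.sqrt x ^ α = x ^ (α / 2) := by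
  rw [Real.sqrt_eq_rpow, ← Real.rpow_mul hx]
  congr 1
  ring

lemma B_Ioc {B : ℝ → ℝ} (hBint : IntegrableOn B (Ioo (-1 : ℝ) 1)) :
    IntegrableOn B (Ioc (-1 : ℝ) 1) := by
  rwa [IntegrableOn, ← Measure.restrict_congr_set Ioo_ae_eq_Ioc]

lemma kern_aesm {B : ℝ → ℝ} (hBint : IntegrableOn B (Ioo (-1 : ℝ) 1)) {ξ : E3} (hξ : ξ ≠ 0) :
    AEStronglyMeasurable (fun σ : S2 => kern B ξ σ) sphMeasure := by
  have hu : ‖‖ξ‖⁻¹ • ξ‖ = 1 := norm_unit ξ hξ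
  have hmap : AEStronglyMeasurable B
      (Measure.map (fun σ : S2 => (inner ℝ (‖ξ‖⁻¹ • ξ) (σ : E3) : ℝ)) sphMeasure) := by
    rw [map_inner_sph _ hu]
    exact (B_Ioc hBint).1.smul_measure _
  have := hmap.comp_aemeasurable (inner_continuous_S2 (‖ξ‖⁻¹ • ξ)).measurable.aemeasurable
  refine this.congr (Eventually.of_forall fun σ => ?_)
  simp only [Function.comp_apply, kern, kern_arg_eq ξ σ]

lemma xiP_continuous (ξ : E3) : Continuous fun σ : S2 => xiP ξ σ := by
  unfold xiP
  exact ((continuous_const.add (continuous_subtype_val.const_smul ‖ξ‖)).const_smul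
    ((2:ℝ)⁻¹))

lemma xiM_continuous (ξ : E3) : Continuous fun σ : S2 => xiM ξ σ := by
  unfold xiM
  exact ((continuous_const.sub (continuous_subtype_val.const_smul ‖ξ‖)).const_smul
    ((2:ℝ)⁻¹))

lemma integrand_aesm {B : ℝ → ℝ} (hBint : IntegrableOn B (Ioo (-1 : ℝ) 1)) {φ : E3 → ℂ}
    (hφ : IsCharFun φ) {ξ : E3} (hξ : ξ ≠ 0) :
    AEStronglyMeasurable (fun σ : S2 => (kern B ξ σ : ℂ) * φ (xiP ξ σ) * φ (xiM ξ σ))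
      sphMeasure := by
  have h1 : AEStronglyMeasurable (fun σ : S2 => (kern B ξ σ : ℂ)) sphMeasure :=
    Complex.continuous_ofReal.comp_aestronglyMeasurable (kern_aesm hBint hξ)
  exact (h1.mul (hφ.continuous.comp (xiP_continuous ξ)).aestronglyMeasurable).mul
    (hφ.continuous.comp (xiM_continuous ξ)).aestronglyMeasurable

lemma integrand_integrable {B : ℝ → ℝ} (hBint : IntegrableOn B (Ioo (-1 : ℝ) 1)) {φ : E3 → ℂ}
    (hφ : IsCharFun φ) {ξ : E3} (hξ : ξ ≠ 0) :
    Integrable (fun σ : S2 => (kern B ξ σ : ℂ) * φ (xiP ξ σ) * φ (xiM ξ σ)) sphMeasure := by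
  have hu : ‖‖ξ‖⁻¹ • ξ‖ = 1 := norm_unit ξ hξ
  refine Integrable.mono'
    (sph_integrable _ hu (fun x => |B x|) (B_Ioc hBint).abs)
    (integrand_aesm hBint hφ hξ) (Eventually.of_forall fun σ => ?_)
  have hk : kern B ξ σ = B ((inner ℝ (‖ξ‖⁻¹ • ξ) (σ : E3) : ℝ)) := by
    rw [kern, kern_arg_eq ξ σ]
  rw [norm_mul, norm_mul, Complex.norm_real, Real.norm_eq_abs, hk]
  calc |B _| * ‖φ (xiP ξ σ)‖ * ‖φ (xiM ξ σ)‖ ≤ |B _| * 1 * 1 := by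
        gcongr
        · exact hφ.norm_le_one _
        · exact hφ.norm_le_one _
    _ = |B _| := by ring

lemma F_integrable {B : ℝ → ℝ} (hBint : IntegrableOn B (Ioo (-1 : ℝ) 1)) {α : ℝ}
    (hα : 0 ≤ α) :
    IntegrableOn (fun x => B x * (((1+x)/2) ^ (α/2) + ((1-x)/2) ^ (α/2))) (Ioc (-1 : ℝ) 1) := by
  rw [IntegrableOn, ← Measure.restrict_congr_set Ioo_ae_eq_Ioc]
  have hfac : Measurable fun x : ℝ => ((1+x)/2) ^ (α/2) + ((1-x)/2) ^ (α/2) := by fun_prop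
  refine Integrable.mono' (hBint.abs.mul_const 2)
    (hBint.1.mul hfac.aestronglyMeasurable)
    (((ae_restrict_mem measurableSet_Ioo).mono fun x hx => ?_))
  obtain ⟨h1, h2⟩ := hx
  have e1 : (0:ℝ) ≤ (1+x)/2 := by linarith
  have e2 : (0:ℝ) ≤ (1-x)/2 := by linarith
  have f1 : ((1+x)/2) ^ (α/2) ≤ 1 := Real.rpow_le_one e1 (by linarith) (by linarith)
  have f2 : ((1-x)/2) ^ (α/2) ≤ 1 := Real.rpow_le_one e2 (by linarith) (by linarith)
  have g1 : 0 ≤ ((1+x)/2) ^ (α/2) := Real.rpow_nonneg e1 _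
  have g2 : 0 ≤ ((1-x)/2) ^ (α/2) := Real.rpow_nonneg e2 _
  rw [norm_mul, Real.norm_eq_abs, Real.norm_eq_abs,
    abs_of_nonneg (by linarith : (0:ℝ) ≤ ((1+x)/2) ^ (α/2) + ((1-x)/2) ^ (α/2))]
  have : ((1+x)/2) ^ (α/2) + ((1-x)/2) ^ (α/2) ≤ 2 := by linarith
  exact mul_le_mul_of_nonneg_left this (abs_nonneg _)

lemma gammaA_nonneg {B : ℝ → ℝ} (hBpos : ∀ s ∈ Set.Ioo (-1 : ℝ) 1, 0 ≤ B s) {α : ℝ} :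
    0 ≤ gammaA B α := by
  apply mul_nonneg (by positivity)
  apply setIntegral_nonneg measurableSet_Ioo
  intro x hx
  obtain ⟨h1, h2⟩ := hx
  have e1 : (0:ℝ) ≤ (1+x)/2 := by linarith
  have e2 : (0:ℝ) ≤ (1-x)/2 := by linarith
  exact mul_nonneg (hBpos x ⟨h1, h2⟩)
    (add_nonneg (Real.rpow_nonneg e1 _) (Real.rpow_nonneg e2 _))


/-- For φ, ψ ∈ K^α and every ξ: |G(φ)(ξ) − G(ψ)(ξ)| ≤ γ_α ‖φ − ψ‖_α |ξ|^α. -/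
theorem Gop_lipschitz (α : ℝ) (hα : α ∈ Set.Icc (0 : ℝ) 2) (B : ℝ → ℝ)
    (hBpos : ∀ s ∈ Set.Ioo (-1 : ℝ) 1, 0 ≤ B s)
    (hBint : IntegrableOn B (Set.Ioo (-1 : ℝ) 1))
    (φ ψ : E3 → ℂ) (hφ : memK α φ) (hψ : memK α ψ) (ξ : E3) :
    (‖Gop B φ ξ - Gop B ψ ξ‖₊ : ℝ≥0∞) ≤
      ENNReal.ofReal (gammaA B α) * dAlpha α φ ψ * (‖ξ‖₊ : ℝ≥0∞) ^ α := by
  obtain ⟨hφc, hφd⟩ := hφ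
  obtain ⟨hψc, hψd⟩ := hψ
  obtain ⟨hα0, hα2⟩ := hα
  by_cases hξ : ξ = 0
  · subst hξ
    have heq : Gop B φ 0 = Gop B ψ 0 := by
      unfold Gop
      congr 1
      funext σ
      have h0 : xiP 0 σ = 0 := by simp [xiP]
      have h0' : xiM 0 σ = 0 := by simp [xiM]
      rw [h0, h0', hφc.apply_zero, hψc.apply_zero]
    rw [heq, sub_self]
    simp
  · set u : E3 := ‖ξ‖⁻¹ • ξ with hu_def
    have hu : ‖u‖ = 1 := norm_unit ξ hξ
    have hξ0 : (0:ℝ) < ‖ξ‖ := norm_pos_iff.mpr hξ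
    set D : ℝ := (dAlpha α φ ψ).toReal with hD
    have hdfin : dAlpha α φ ψ ≠ ⊤ := dAlpha_ne_top ⟨hφc, hφd⟩ ⟨hψc, hψd⟩
    have hD0 : 0 ≤ D := ENNReal.toReal_nonneg
    have hbnd := dAlpha_pointwise hα0 hφc hψc hdfin
    set F : ℝ → ℝ := fun x => B x * (((1+x)/2) ^ (α/2) + ((1-x)/2) ^ (α/2)) with hF
    have hFint : IntegrableOn F (Set.Ioc (-1 : ℝ) 1) := F_integrable hBint hα0
    have hfint := integrand_integrable hBint hφc hξ
    have hgint := integrand_integrable hBint hψc hξ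
    have hae : ∀ᵐ σ ∂sphMeasure,
        ‖((kern B ξ σ : ℂ) * φ (xiP ξ σ) * φ (xiM ξ σ))
          - ((kern B ξ σ : ℂ) * ψ (xiP ξ σ) * ψ (xiM ξ σ))‖
          ≤ D * ‖ξ‖ ^ α * F ((inner ℝ u (σ : E3) : ℝ)) := by
      filter_upwards [sph_ae_Ioo u hu] with σ hσ
      obtain ⟨hs1, hs2⟩ := hσ
      set sp : ℝ := (inner ℝ u (σ : E3) : ℝ) with hsp
      have hk : kern B ξ σ = B sp := by rw [kern, kern_arg_eq ξ σ]
      have hBsp : 0 ≤ B sp := hBpos sp ⟨hs1, hs2⟩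
      have e1 : (0:ℝ) ≤ (1+sp)/2 := by linarith
      have e2 : (0:ℝ) ≤ (1-sp)/2 := by linarith
      have hxp : ‖xiP ξ σ‖ ^ α = ‖ξ‖ ^ α * ((1+sp)/2) ^ (α/2) := by
        rw [norm_xiP_eq ξ hξ σ, Real.mul_rpow (norm_nonneg _) (Real.sqrt_nonneg _),
          sqrt_rpow_half _ e1]
      have hxm : ‖xiM ξ σ‖ ^ α = ‖ξ‖ ^ α * ((1-sp)/2) ^ (α/2) := by
        rw [norm_xiM_eq ξ hξ σ, Real.mul_rpow (norm_nonneg _) (Real.sqrt_nonneg _),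
          sqrt_rpow_half _ e2]
      have step1 : ((kern B ξ σ : ℂ) * φ (xiP ξ σ) * φ (xiM ξ σ))
          - ((kern B ξ σ : ℂ) * ψ (xiP ξ σ) * ψ (xiM ξ σ))
          = (kern B ξ σ : ℂ) * ((φ (xiP ξ σ) - ψ (xiP ξ σ)) * φ (xiM ξ σ)
            + ψ (xiP ξ σ) * (φ (xiM ξ σ) - ψ (xiM ξ σ))) := by ring
      rw [step1, norm_mul, Complex.norm_real, Real.norm_eq_abs, hk, abs_of_nonneg hBsp]
      have step2 : ‖(φ (xiP ξ σ) - ψ (xiP ξ σ)) * φ (xiM ξ σ)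
          + ψ (xiP ξ σ) * (φ (xiM ξ σ) - ψ (xiM ξ σ))‖
          ≤ D * ‖xiP ξ σ‖ ^ α + D * ‖xiM ξ σ‖ ^ α := by
        calc ‖(φ (xiP ξ σ) - ψ (xiP ξ σ)) * φ (xiM ξ σ)
              + ψ (xiP ξ σ) * (φ (xiM ξ σ) - ψ (xiM ξ σ))‖
            ≤ ‖(φ (xiP ξ σ) - ψ (xiP ξ σ)) * φ (xiM ξ σ)‖
              + ‖ψ (xiP ξ σ) * (φ (xiM ξ σ) - ψ (xiM ξ σ))‖ := norm_add_le _ _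
          _ = ‖φ (xiP ξ σ) - ψ (xiP ξ σ)‖ * ‖φ (xiM ξ σ)‖
              + ‖ψ (xiP ξ σ)‖ * ‖φ (xiM ξ σ) - ψ (xiM ξ σ)‖ := by rw [norm_mul, norm_mul]
          _ ≤ (D * ‖xiP ξ σ‖ ^ α) * 1 + 1 * (D * ‖xiM ξ σ‖ ^ α) := by
              refine add_le_add (mul_le_mul (hbnd _) (hφc.norm_le_one _) (norm_nonneg _)
                  (mul_nonneg hD0 (Real.rpow_nonneg (norm_nonneg _) _)))
                (mul_le_mul (hψc.norm_le_one _) (hbnd _) (norm_nonneg _) zero_le_one)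
          _ = D * ‖xiP ξ σ‖ ^ α + D * ‖xiM ξ σ‖ ^ α := by ring
      calc B sp * ‖(φ (xiP ξ σ) - ψ (xiP ξ σ)) * φ (xiM ξ σ)
            + ψ (xiP ξ σ) * (φ (xiM ξ σ) - ψ (xiM ξ σ))‖
          ≤ B sp * (D * ‖xiP ξ σ‖ ^ α + D * ‖xiM ξ σ‖ ^ α) :=
            mul_le_mul_of_nonneg_left step2 hBsp
        _ = D * ‖ξ‖ ^ α * F sp := by rw [hxp, hxm, hF]; ring
    have hIm : Integrable (fun σ : S2 => D * ‖ξ‖ ^ α * F ((inner ℝ u (σ : E3) : ℝ)))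
        sphMeasure := (sph_integrable u hu F hFint).const_mul _
    have hstep : ‖Gop B φ ξ - Gop B ψ ξ‖
        ≤ ∫ σ : S2, D * ‖ξ‖ ^ α * F ((inner ℝ u (σ : E3) : ℝ)) ∂sphMeasure := by
      rw [Gop, Gop, ← integral_sub hfint hgint]
      calc ‖∫ σ : S2, (((kern B ξ σ : ℂ) * φ (xiP ξ σ) * φ (xiM ξ σ))
            - ((kern B ξ σ : ℂ) * ψ (xiP ξ σ) * ψ (xiM ξ σ))) ∂sphMeasure‖
          ≤ ∫ σ : S2, ‖((kern B ξ σ : ℂ) * φ (xiP ξ σ) * φ (xiM ξ σ))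
            - ((kern B ξ σ : ℂ) * ψ (xiP ξ σ) * ψ (xiM ξ σ))‖ ∂sphMeasure :=
            norm_integral_le_integral_norm _
        _ ≤ _ := integral_mono_ae (hfint.sub hgint).norm hIm hae
    have hval : ∫ σ : S2, D * ‖ξ‖ ^ α * F ((inner ℝ u (σ : E3) : ℝ)) ∂sphMeasure
        = D * ‖ξ‖ ^ α * gammaA B α := by
      rw [integral_const_mul, sph_integral u hu F hFint.1, gammaA]
      rw [← setIntegral_congr_set (Ioo_ae_eq_Ioc (a := (-1:ℝ)) (b := (1:ℝ))), hF]
    rw [hval] at hstep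
    rw [← ofReal_norm_eq_coe_nnnorm]
    calc ENNReal.ofReal ‖Gop B φ ξ - Gop B ψ ξ‖
        ≤ ENNReal.ofReal (gammaA B α * (D * ‖ξ‖ ^ α)) :=
          ENNReal.ofReal_le_ofReal (by linarith [hstep])
      _ = ENNReal.ofReal (gammaA B α) * ENNReal.ofReal (D * ‖ξ‖ ^ α) :=
          ENNReal.ofReal_mul (gammaA_nonneg hBpos)
      _ = ENNReal.ofReal (gammaA B α) * (ENNReal.ofReal D * ENNReal.ofReal (‖ξ‖ ^ α)) := by
          rw [ENNReal.ofReal_mul hD0]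
      _ = ENNReal.ofReal (gammaA B α) * dAlpha α φ ψ * (‖ξ‖₊ : ℝ≥0∞) ^ α := by
          rw [hD, ENNReal.ofReal_toReal hdfin, ← ENNReal.ofReal_rpow_of_pos hξ0,
            ofReal_norm_eq_coe_nnnorm, mul_assoc]
end
end
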